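/- arXiv:1909.01030 — 8 statements merged into one kernel-verified Lean document; each statement's English description precedes it below -/
import Mathlib

section
/- Let K be a field, m ≥ 1, and d1, …, dm, k natural numbers with k ≤ di for all i. The map Ψ sending a tuple (f1, …, fm, g), where f1, …, fm are monic polynomials over K of degrees d1−k, …, dm−k with no common non-unit factor and g is a monic polynomial of degree k, to the tuple (f1·g, …, fm·g), is a bijection onto the set of m-tuples (h1, …, hm) of monic polynomials of degrees d1, …, dm whose (monic) greatest common divisor has degree exactly k. -/
open Polynomial

/-- The map `Ψ : (f₁, …, f_m, g) ↦ (f₁·g, …, f_m·g)` is a bijection from the set of tuples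
where the `fᵢ` are monic of degrees `dᵢ−k` with no common non-unit factor and `g` is monic of
degree `k`, onto the set of `m`-tuples of monic polynomials of degrees `d₁, …, d_m` whose
monic gcd has degree exactly `k`. -/
theorem psi_bijOn_tuples (K : Type*) [Field K] [DecidableEq K] (m : ℕ) (hm : 1 ≤ m)
    (d : Fin m → ℕ) (k : ℕ) (hk : ∀ i, k ≤ d i) :
    Set.BijOn (fun t : (Fin m → K[X]) × K[X] => fun i => t.1 i * t.2)
      {t : (Fin m → K[X]) × K[X] |
        (∀ i, (t.1 i).Monic ∧ (t.1 i).natDegree = d i - k) ∧ t.2.Monic ∧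
        t.2.natDegree = k ∧ (∀ p : K[X], (∀ i, p ∣ t.1 i) → IsUnit p)}
      {h : Fin m → K[X] | (∀ i, (h i).Monic ∧ (h i).natDegree = d i) ∧
        (Finset.univ.gcd h).natDegree = k} := by
  refine ⟨?_, ?_, ?_⟩
  · rintro ⟨f, g⟩ ⟨hf, hg, hgk, hcop⟩
    have hg0 : g ≠ 0 := hg.ne_zero
    have hgcdf : Finset.univ.gcd f = 1 := by
      rw [← Finset.normalize_gcd, normalize_eq_one]
      exact hcop _ (fun i => Finset.gcd_dvd (Finset.mem_univ i))
    refine ⟨fun i => ⟨(hf i).1.mul hg, ?_⟩, ?_⟩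
    · rw [natDegree_mul (hf i).1.ne_zero hg0, (hf i).2, hgk, Nat.sub_add_cancel (hk i)]
    · rw [Finset.gcd_mul_right, hgcdf, one_mul, hg.normalize_eq_self, hgk]
  · rintro ⟨f, g⟩ ⟨hf, hg, hgk, hcop⟩ ⟨f', g'⟩ ⟨hf', hg', hgk', hcop'⟩ heq
    simp only at heq
    have hgcdf : Finset.univ.gcd f = 1 := by
      rw [← Finset.normalize_gcd, normalize_eq_one]
      exact hcop _ (fun i => Finset.gcd_dvd (Finset.mem_univ i))
    have hgcdf' : Finset.univ.gcd f' = 1 := by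
      rw [← Finset.normalize_gcd, normalize_eq_one]
      exact hcop' _ (fun i => Finset.gcd_dvd (Finset.mem_univ i))
    have hgg : g = g' := by
      have h1 : Finset.univ.gcd (fun i => f i * g) = Finset.univ.gcd (fun i => f' i * g') := by
        rw [heq]
      rwa [Finset.gcd_mul_right, Finset.gcd_mul_right, hgcdf, hgcdf', one_mul, one_mul,
        hg.normalize_eq_self, hg'.normalize_eq_self] at h1
    have hff : f = f' := by
      funext i
      have := congrFun heq i
      rw [hgg] at this
      exact mul_right_cancel₀ hg'.ne_zero this
    simp [Prod.ext_iff, hgg, hff]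
  · rintro h ⟨hh, hdeg⟩
    set g := Finset.univ.gcd h with hgdef
    have hg0 : g ≠ 0 := by
      intro h0
      exact (hh ⟨0, hm⟩).1.ne_zero
        (Finset.gcd_eq_zero_iff.mp h0 ⟨0, hm⟩ (Finset.mem_univ _))
    have hg : g.Monic := by
      have := Polynomial.monic_normalize (p := g) hg0
      rwa [hgdef, Finset.normalize_gcd] at this
    choose c hc using fun i => (Finset.gcd_dvd (Finset.mem_univ i) : g ∣ h i)
    have hcm : ∀ i, (c i).Monic := fun i => hg.of_mul_monic_left (by rw [← hc i]; exact (hh i).1)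
    refine ⟨(c, g), ⟨fun i => ⟨hcm i, ?_⟩, hg, hdeg, ?_⟩, ?_⟩
    · show (c i).natDegree = d i - k
      have h2 := (hh i).2
      rw [hc i, natDegree_mul hg0 (hcm i).ne_zero] at h2
      have h3 := hk i
      have h4 : g.natDegree = k := hdeg
      omega
    · intro p hp
      have hdvd : g * p ∣ g := by
        apply Finset.dvd_gcd
        intro i _
        rw [hc i]
        exact mul_dvd_mul_left g (hp i)
      obtain ⟨u, hu⟩ := hdvd
      rw [mul_assoc] at hu
      have : (1 : K[X]) = p * u := mul_left_cancel₀ hg0 (by rw [← hu, mul_one])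
      exact IsUnit.of_mul_eq_one (a := p) u this.symm
    · funext i
      show c i * g = h i
      rw [mul_comm]
      exact (hc i).symm
end

section
/- Let F_q be a finite field with q elements and let d1, d2 be natural numbers. The number of pairs (u, v) of coprime monic polynomials over F_q with deg u = d1 and deg v = d2 equals q^{d1+d2} − q^{d1+d2−1} if d1 > 0 and d2 > 0, and equals q^{d1+d2} if d1 = 0 or d2 = 0. -/
open Polynomial
namespace CoprimeCnt
variable (F : Type*) [Field F] [Fintype F]

set_option linter.unusedSectionVars false

def Mset (n : ℕ) : Set F[X] := {p | p.Monic ∧ p.natDegree = n}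

def S (a b : ℕ) : Set (F[X] × F[X]) :=
  {p : F[X] × F[X] | p.1.Monic ∧ p.2.Monic ∧ p.1.natDegree = a ∧
      p.2.natDegree = b ∧ IsCoprime p.1 p.2}

def T (a b : ℕ) : Set (F[X] × F[X]) :=
  {p : F[X] × F[X] | p.1.Monic ∧ p.2.Monic ∧ p.1.natDegree = a ∧ p.2.natDegree = b}

noncomputable def msetEquiv (n : ℕ) : (Mset F n) ≃ (Fin n → F) :=
  ((Equiv.setCongr rfl).trans (monicEquivDegreeLT n)).trans (degreeLTEquiv F n).toEquiv

lemma card_Mset (n : ℕ) : Nat.card (Mset F n) = Fintype.card F ^ n := by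
  rw [Nat.card_congr (msetEquiv F n), Nat.card_eq_fintype_card, Fintype.card_fun,
    Fintype.card_fin]

lemma finite_Mset (n : ℕ) : (Mset F n).Finite := by
  rw [← Set.finite_coe_iff]
  exact Finite.of_equiv _ (msetEquiv F n).symm

lemma ncard_Mset (n : ℕ) : (Mset F n).ncard = Fintype.card F ^ n := by
  rw [← Nat.card_coe_set_eq, card_Mset]

lemma T_eq_prod (a b : ℕ) : T F a b = (Mset F a) ×ˢ (Mset F b) := by
  ext p; simp only [T, Mset, Set.mem_setOf_eq, Set.mem_prod]; tauto

lemma ncard_prod {α β : Type*} (s : Set α) (t : Set β) :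
    (s ×ˢ t).ncard = s.ncard * t.ncard := by
  rw [← Nat.card_coe_set_eq, ← Nat.card_coe_set_eq, ← Nat.card_coe_set_eq,
    Nat.card_congr (Equiv.Set.prod s t), Nat.card_prod]

lemma finite_T (a b : ℕ) : (T F a b).Finite := by
  rw [T_eq_prod]; exact (finite_Mset F a).prod (finite_Mset F b)

lemma ncard_T (a b : ℕ) : (T F a b).ncard = Fintype.card F ^ (a + b) := by
  rw [T_eq_prod, ncard_prod, ncard_Mset, ncard_Mset, pow_add]

lemma S_subset_T (a b : ℕ) : S F a b ⊆ T F a b := fun p hp => ⟨hp.1, hp.2.1, hp.2.2.1, hp.2.2.2.1⟩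

lemma finite_S (a b : ℕ) : (S F a b).Finite := (finite_T F a b).subset (S_subset_T F a b)

variable {F}

lemma gcd_of_coprime [DecidableEq F] {g u v : F[X]} (hg : g.Monic) (h : IsCoprime u v) :
    gcd (g * u) (g * v) = g := by
  have h1 : gcd u v = 1 := by
    rw [← normalize_gcd, normalize_eq_one]
    exact (gcd_isUnit_iff u v).mpr h
  rw [gcd_mul_left, h1, mul_one, hg.normalize_eq_self]

lemma decomp [DecidableEq F] {u v : F[X]} (hu : u.Monic) (hv : v.Monic) :
    ∃ g u' v' : F[X], g.Monic ∧ u'.Monic ∧ v'.Monic ∧ IsCoprime u' v' ∧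
      u = g * u' ∧ v = g * v' ∧ g.natDegree ≤ u.natDegree ∧ g.natDegree ≤ v.natDegree ∧
      u'.natDegree = u.natDegree - g.natDegree ∧ v'.natDegree = v.natDegree - g.natDegree := by
  set g := gcd u v with hgdef
  have hg0 : g ≠ 0 := fun h0 => hu.ne_zero ((gcd_eq_zero_iff u v).mp h0).1
  have hgm : g.Monic := by
    have := Polynomial.monic_normalize (p := g) hg0
    rwa [hgdef, normalize_gcd] at this
  obtain ⟨u', hu'⟩ := gcd_dvd_left u v
  obtain ⟨v', hv'⟩ := gcd_dvd_right u v
  have hu'm : u'.Monic := hgm.of_mul_monic_left (hu' ▸ hu)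
  have hv'm : v'.Monic := hgm.of_mul_monic_left (hv' ▸ hv)
  have hcop : IsCoprime u' v' := by
    apply (gcd_isUnit_iff u' v').mp
    have key : gcd (g * u') (g * v') = g * gcd u' v' := by
      rw [gcd_mul_left, hgm.normalize_eq_self]
    have : g = g * gcd u' v' := by rw [← key, ← hu', ← hv']
    have h1 : gcd u' v' = 1 := mul_left_cancel₀ hg0 (by rw [← this, mul_one])
    rw [h1]; exact isUnit_one
  have hdu : u.natDegree = g.natDegree + u'.natDegree := by
    rw [hu', natDegree_mul hg0 hu'm.ne_zero]
  have hdv : v.natDegree = g.natDegree + v'.natDegree := by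
    rw [hv', natDegree_mul hg0 hv'm.ne_zero]
  exact ⟨g, u', v', hgm, hu'm, hv'm, hcop, hu', hv', by omega, by omega, by omega, by omega⟩

variable (F)

noncomputable def mu : F[X] × (F[X] × F[X]) → F[X] × F[X] := fun x => (x.1 * x.2.1, x.1 * x.2.2)

def Phi (a b k : ℕ) : Set (F[X] × F[X]) := mu F '' ((Mset F k) ×ˢ (S F (a - k) (b - k)))

lemma cover (a b : ℕ) : T F a b = ⋃ k ∈ Finset.range (min a b + 1), Phi F a b k := by
  classical
  ext p
  constructor
  · rintro ⟨h1, h2, h3, h4⟩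
    obtain ⟨g, u', v', hgm, hu'm, hv'm, hcop, he1, he2, hle1, hle2, hd1, hd2⟩ := decomp h1 h2
    refine Set.mem_biUnion (x := g.natDegree) (Finset.mem_range.mpr ?_) ?_
    · exact Nat.lt_succ_of_le (le_min (h3 ▸ hle1) (h4 ▸ hle2))
    · exact ⟨(g, (u', v')), ⟨⟨hgm, rfl⟩, hu'm, hv'm,
        (show u'.natDegree = a - g.natDegree by omega),
        (show v'.natDegree = b - g.natDegree by omega), hcop⟩,
        by simp [mu, ← he1, ← he2]⟩
  · intro hp
    simp only [Set.mem_iUnion, Phi, Set.mem_image, Set.mem_prod, exists_prop] at hp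
    obtain ⟨k, hk, ⟨g, w⟩, ⟨⟨hgm, hgd⟩, hS⟩, rfl⟩ := hp
    obtain ⟨hw1, hw2, hw3, hw4, _⟩ := hS
    have hk' : k ≤ min a b := Nat.lt_succ_iff.mp (Finset.mem_range.mp hk)
    refine ⟨hgm.mul hw1, hgm.mul hw2, ?_, ?_⟩
    · show (g * w.1).natDegree = a
      rw [natDegree_mul hgm.ne_zero hw1.ne_zero]; omega
    · show (g * w.2).natDegree = b
      rw [natDegree_mul hgm.ne_zero hw2.ne_zero]; omega

end CoprimeCnt

namespace CoprimeCnt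
variable (F : Type*) [Field F] [Fintype F]

lemma injOn_mu (a b k : ℕ) : Set.InjOn (mu F) ((Mset F k) ×ˢ (S F (a - k) (b - k))) := by
  classical
  rintro ⟨g, u, v⟩ ⟨⟨hgm, _⟩, _, _, _, _, hcop⟩ ⟨g', u', v'⟩ ⟨⟨hgm', _⟩, _, _, _, _, hcop'⟩ heq
  have h1 : g * u = g' * u' := congrArg Prod.fst heq
  have h2 : g * v = g' * v' := congrArg Prod.snd heq
  have hg : g = g' := by
    have hx := gcd_of_coprime (u := u) (v := v) hgm hcop
    rw [h1, h2, gcd_of_coprime hgm' hcop'] at hx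
    exact hx.symm
  subst hg
  have hu : u = u' := mul_left_cancel₀ hgm.ne_zero h1
  have hv : v = v' := mul_left_cancel₀ hgm.ne_zero h2
  simp [hu, hv]

lemma ncard_Phi (a b k : ℕ) :
    (Phi F a b k).ncard = Fintype.card F ^ k * (S F (a - k) (b - k)).ncard := by
  rw [Phi, Set.ncard_image_of_injOn (injOn_mu F a b k), ncard_prod, ncard_Mset]

lemma finite_Phi (a b k : ℕ) : (Phi F a b k).Finite :=
  (((finite_Mset F k).prod (finite_S F (a - k) (b - k))).image _)

lemma mem_Phi_gcd [DecidableEq F] {a b k : ℕ} {p : F[X] × F[X]} (hp : p ∈ Phi F a b k) :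
    (gcd p.1 p.2).natDegree = k := by
  obtain ⟨⟨g, u, v⟩, ⟨⟨hgm, hgd⟩, _, _, _, _, hcop⟩, rfl⟩ := hp
  show (gcd (g * u) (g * v)).natDegree = k
  rw [gcd_of_coprime hgm hcop]; exact hgd

lemma disj_Phi (a b : ℕ) {k l : ℕ} (h : k ≠ l) : Disjoint (Phi F a b k) (Phi F a b l) := by
  classical
  rw [Set.disjoint_left]
  intro p hk hl
  exact h ((mem_Phi_gcd F hk).symm.trans (mem_Phi_gcd F hl))

lemma ncard_biUnion_sum {ι α : Type*} (t : Finset ι) (f : ι → Set α)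
    (hf : ∀ i ∈ t, (f i).Finite)
    (hd : ∀ i ∈ t, ∀ j ∈ t, i ≠ j → Disjoint (f i) (f j)) :
    (⋃ i ∈ t, f i).ncard = ∑ i ∈ t, (f i).ncard := by
  classical
  induction t using Finset.induction_on with
  | empty => simp
  | @insert a s ha ih =>
    rw [Finset.set_biUnion_insert, Finset.sum_insert ha]
    have hdisj : Disjoint (f a) (⋃ i ∈ s, f i) := by
      rw [Set.disjoint_left]
      intro x hx hx'
      simp only [Set.mem_iUnion, exists_prop] at hx'
      obtain ⟨i, his, hxi⟩ := hx'
      exact Set.disjoint_left.mp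
        (hd a (Finset.mem_insert_self a s) i (Finset.mem_insert_of_mem his)
          (by rintro rfl; exact ha his)) hx hxi
    rw [Set.ncard_union_eq hdisj (hf a (Finset.mem_insert_self a s))
      (Set.Finite.biUnion s.finite_toSet fun i hi => hf i (Finset.mem_insert_of_mem hi)),
      ih (fun i hi => hf i (Finset.mem_insert_of_mem hi))
        (fun i hi j hj hij => hd i (Finset.mem_insert_of_mem hi) j
          (Finset.mem_insert_of_mem hj) hij)]

lemma key_identity (a b : ℕ) :
    ∑ k ∈ Finset.range (min a b + 1), Fintype.card F ^ k * (S F (a - k) (b - k)).ncard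
      = Fintype.card F ^ (a + b) := by
  calc ∑ k ∈ Finset.range (min a b + 1), Fintype.card F ^ k * (S F (a - k) (b - k)).ncard
      = ∑ k ∈ Finset.range (min a b + 1), (Phi F a b k).ncard :=
        Finset.sum_congr rfl fun k _ => (ncard_Phi F a b k).symm
    _ = (⋃ k ∈ Finset.range (min a b + 1), Phi F a b k).ncard :=
        (ncard_biUnion_sum _ _ (fun i _ => finite_Phi F a b i)
          (fun i _ j _ hij => disj_Phi F a b hij)).symm
    _ = (T F a b).ncard := by rw [← cover]
    _ = Fintype.card F ^ (a + b) := ncard_T F a b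

end CoprimeCnt

namespace CoprimeCnt
variable (F : Type*) [Field F] [Fintype F]
set_option linter.unusedSectionVars false

lemma S_a_zero (a : ℕ) : S F a 0 = (Mset F a) ×ˢ {(1 : F[X])} := by
  ext p
  simp only [S, Mset, Set.mem_setOf_eq, Set.mem_prod, Set.mem_singleton_iff]
  constructor
  · rintro ⟨h1, h2, h3, h4, _⟩
    exact ⟨⟨h1, h3⟩, h2.natDegree_eq_zero.mp h4⟩
  · rintro ⟨⟨h1, h3⟩, h2⟩
    exact ⟨h1, by rw [h2]; exact monic_one, h3, by simp [h2],
      by rw [h2]; exact isCoprime_one_right⟩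

lemma S_zero_b (b : ℕ) : S F 0 b = ({(1 : F[X])} : Set F[X]) ×ˢ (Mset F b) := by
  ext p
  simp only [S, Mset, Set.mem_setOf_eq, Set.mem_prod, Set.mem_singleton_iff]
  constructor
  · rintro ⟨h1, h2, h3, h4, _⟩
    exact ⟨h1.natDegree_eq_zero.mp h3, h2, h4⟩
  · rintro ⟨h1, h2, h4⟩
    exact ⟨by rw [h1]; exact monic_one, h2, by simp [h1], h4,
      by rw [h1]; exact isCoprime_one_left⟩

lemma ncard_S_a_zero (a : ℕ) : (S F a 0).ncard = Fintype.card F ^ a := by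
  rw [S_a_zero, ncard_prod, ncard_Mset, Set.ncard_singleton, mul_one]

lemma ncard_S_zero_b (b : ℕ) : (S F 0 b).ncard = Fintype.card F ^ b := by
  rw [S_zero_b, ncard_prod, ncard_Mset, Set.ncard_singleton, one_mul]

lemma main_pos (a b : ℕ) (ha : 1 ≤ a) (hb : 1 ≤ b) :
    (S F a b).ncard + Fintype.card F ^ (a + b - 1) = Fintype.card F ^ (a + b) := by
  have I := key_identity F a b
  have I' := key_identity F (a - 1) (b - 1)
  rw [Finset.sum_range_succ'] at I
  have hm : min a b = min (a - 1) (b - 1) + 1 := by omega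
  have hsum : ∑ k ∈ Finset.range (min a b),
      Fintype.card F ^ (k + 1) * (S F (a - (k + 1)) (b - (k + 1))).ncard
      = Fintype.card F ^ (a + b - 1) := by
    rw [hm]
    calc ∑ k ∈ Finset.range (min (a - 1) (b - 1) + 1),
          Fintype.card F ^ (k + 1) * (S F (a - (k + 1)) (b - (k + 1))).ncard
        = ∑ k ∈ Finset.range (min (a - 1) (b - 1) + 1),
            Fintype.card F * (Fintype.card F ^ k * (S F ((a - 1) - k) ((b - 1) - k)).ncard) := by
          refine Finset.sum_congr rfl fun k _ => ?_
          have e1 : a - (k + 1) = (a - 1) - k := by omega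
          have e2 : b - (k + 1) = (b - 1) - k := by omega
          rw [e1, e2, pow_succ]
          ring
      _ = Fintype.card F * Fintype.card F ^ ((a - 1) + (b - 1)) := by
          rw [← Finset.mul_sum, I']
      _ = Fintype.card F ^ (a + b - 1) := by
          rw [← pow_succ']
          congr 1
          omega
  rw [hsum] at I
  simp only [Nat.sub_zero, pow_zero, one_mul] at I
  omega

end CoprimeCnt


open CoprimeCnt in

/-- Over a finite field with `q` elements, the number of pairs of coprime monic polynomials
of degrees `d₁, d₂` equals `q^(d₁+d₂) − q^(d₁+d₂−1)` if `d₁, d₂ > 0`, and `q^(d₁+d₂)`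
if `d₁ = 0` or `d₂ = 0`. -/
theorem count_coprime_monic_pairs (F : Type*) [Field F] [Fintype F] (q : ℕ)
    (hq : Fintype.card F = q) (d1 d2 : ℕ) :
    (0 < d1 → 0 < d2 →
      Set.ncard {p : F[X] × F[X] | p.1.Monic ∧ p.2.Monic ∧ p.1.natDegree = d1 ∧
          p.2.natDegree = d2 ∧ IsCoprime p.1 p.2}
        = q ^ (d1 + d2) - q ^ (d1 + d2 - 1)) ∧
    (d1 = 0 ∨ d2 = 0 →
      Set.ncard {p : F[X] × F[X] | p.1.Monic ∧ p.2.Monic ∧ p.1.natDegree = d1 ∧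
          p.2.natDegree = d2 ∧ IsCoprime p.1 p.2}
        = q ^ (d1 + d2)) := by
  subst hq
  constructor
  · intro h1 h2
    have := main_pos F d1 d2 h1 h2
    have hS : {p : F[X] × F[X] | p.1.Monic ∧ p.2.Monic ∧ p.1.natDegree = d1 ∧
        p.2.natDegree = d2 ∧ IsCoprime p.1 p.2} = S F d1 d2 := rfl
    rw [hS]
    omega
  · rintro (rfl | rfl)
    · have := ncard_S_zero_b F d2
      simpa [S] using this
    · have := ncard_S_a_zero F d1
      simpa [S] using this
end

section
/- Let F_q be a finite field with q elements, let m ≥ 2, and let d1, …, dm be positive natural numbers. The number of m-tuples (f1, …, fm) of monic polynomials over F_q with deg fi = di for all i and with no common non-unit factor equals q^{d1+⋯+dm} − q^{d1+⋯+dm−(m−1)}. -/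
open Polynomial


section Aux
variable {F : Type*} [Field F]

lemma monic_divX {p : F[X]} (hp : p.Monic) (h1 : 1 ≤ p.natDegree) : p.divX.Monic := by
  unfold Monic leadingCoeff
  rw [natDegree_divX_eq_natDegree_tsub_one, coeff_divX]
  have : p.natDegree - 1 + 1 = p.natDegree := by omega
  rw [this]
  exact hp.coeff_natDegree



/-- Monic polynomials of degree n ≃ Fin n → F. -/
noncomputable def monicEquiv (n : ℕ) :
    {p : F[X] // p.Monic ∧ p.natDegree = n} ≃ (Fin n → F) where
  toFun p := degreeLTEquiv F n ⟨p.1 - X ^ n, by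
    rw [mem_degreeLT]
    rcases p with ⟨p, hp, hn⟩
    have h1 : p.degree = (X ^ n : F[X]).degree := by
      rw [degree_X_pow, ← hn, degree_eq_natDegree hp.ne_zero]
    have := degree_sub_lt h1 hp.ne_zero (by simp [hp.leadingCoeff])
    rwa [degree_eq_natDegree hp.ne_zero, hn] at this⟩
  invFun v := ⟨X ^ n + ((degreeLTEquiv F n).symm v : F[X]), by
    have hv := ((degreeLTEquiv F n).symm v).2
    rw [mem_degreeLT] at hv
    refine ⟨monic_X_pow_add hv, ?_⟩
    have hdeg : (X ^ n + ((degreeLTEquiv F n).symm v : F[X])).degree = (n : WithBot ℕ) := by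
      rw [degree_add_eq_left_of_degree_lt (by rwa [degree_X_pow]), degree_X_pow]
    exact natDegree_eq_of_degree_eq_some hdeg⟩
  left_inv := by
    rintro ⟨p, hp, hn⟩
    simp only [LinearEquiv.symm_apply_apply, Subtype.mk.injEq]
    ring
  right_inv := by
    intro v
    simp only []
    have h2 : (X ^ n + ((degreeLTEquiv F n).symm v : F[X]) - X ^ n)
        = ((degreeLTEquiv F n).symm v : F[X]) := by ring
    have h3 : (⟨X ^ n + ((degreeLTEquiv F n).symm v : F[X]) - X ^ n, by
        rw [mem_degreeLT, h2]; rw [← mem_degreeLT]; exact ((degreeLTEquiv F n).symm v).2⟩ :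
        degreeLT F n) = (degreeLTEquiv F n).symm v := Subtype.ext h2
    rw [h3, LinearEquiv.apply_symm_apply]


lemma card_monic (n : ℕ) [Fintype F] :
    Nat.card {p : F[X] // p.Monic ∧ p.natDegree = n} = Fintype.card F ^ n := by
  rw [Nat.card_congr (monicEquiv n)]
  simp [Nat.card_eq_fintype_card]

instance {n : ℕ} [Finite F] : Finite {p : F[X] // p.Monic ∧ p.natDegree = n} :=
  .of_equiv _ (monicEquiv n).symm

variable [DecidableEq F] {m : ℕ}

lemma gcd_monic (hm : 0 < m) (f : Fin m → F[X]) (hf : ∀ i, (f i).Monic) :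
    (Finset.univ.gcd f).Monic := by
  have hne : Finset.univ.gcd f ≠ 0 := by
    intro h
    rw [Finset.gcd_eq_zero_iff] at h
    exact (hf ⟨0, hm⟩).ne_zero (h _ (Finset.mem_univ _))
  have := Finset.normalize_gcd (s := (Finset.univ : Finset (Fin m))) (f := f)
  rw [← this]
  exact monic_normalize hne

lemma decomp (hm : 0 < m) (f : Fin m → F[X]) (hf : ∀ i, (f i).Monic) :
    (∀ i, Finset.univ.gcd f * (f i / Finset.univ.gcd f) = f i) ∧
    (∀ i, (f i / Finset.univ.gcd f).Monic) ∧
    (∀ i, (f i / Finset.univ.gcd f).natDegree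
        = (f i).natDegree - (Finset.univ.gcd f).natDegree) ∧
    (∀ p : F[X], (∀ i, p ∣ f i / Finset.univ.gcd f) → IsUnit p) := by
  set g := Finset.univ.gcd f with hg
  have hgm : g.Monic := gcd_monic hm f hf
  have hmul : ∀ i, g * (f i / g) = f i := fun i =>
    EuclideanDomain.mul_div_cancel' hgm.ne_zero
      (hg ▸ Finset.gcd_dvd (Finset.mem_univ i))
  have hmon : ∀ i, (f i / g).Monic := fun i =>
    hgm.of_mul_monic_left (by rw [hmul i]; exact hf i)
  refine ⟨hmul, hmon, fun i => ?_, fun p hp => ?_⟩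
  · have := natDegree_mul hgm.ne_zero (hmon i).ne_zero
    rw [hmul i] at this
    omega
  · have hdvd : ∀ i, g * p ∣ f i := fun i => by
      rw [← hmul i]; exact mul_dvd_mul_left g (hp i)
    have : g * p ∣ g := hg ▸ Finset.dvd_gcd fun i _ => hdvd i
    have h2 : g * p ∣ g * 1 := by rwa [mul_one]
    exact isUnit_of_dvd_one ((mul_dvd_mul_iff_left hgm.ne_zero).mp h2)

lemma gcd_mul_coprime (a : F[X]) (ha : a.Monic) (h : Fin m → F[X])
    (hcop : ∀ p : F[X], (∀ i, p ∣ h i) → IsUnit p) :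
    Finset.univ.gcd (fun i => a * h i) = a := by
  rw [Finset.gcd_mul_left]
  have hu : IsUnit (Finset.univ.gcd h) :=
    hcop _ fun i => Finset.gcd_dvd (Finset.mem_univ i)
  have h1 : Finset.univ.gcd h = 1 := by
    rw [← Finset.normalize_gcd, normalize_eq_one]; exact hu
  rw [h1, mul_one, ha.normalize_eq_self]

/-- The set of all monic tuples of prescribed degrees. -/
def Tset (F : Type*) [Field F] {m : ℕ} (d : Fin m → ℕ) : Set (Fin m → F[X]) :=
  {h | ∀ i, (h i).Monic ∧ (h i).natDegree = d i}

/-- Non-coprime monic tuples of prescribed degrees. -/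
def NCset (F : Type*) [Field F] {m : ℕ} (d : Fin m → ℕ) : Set (Fin m → F[X]) :=
  {h | (∀ i, (h i).Monic ∧ (h i).natDegree = d i) ∧
    ¬ ∀ p : F[X], (∀ i, p ∣ h i) → IsUnit p}

/-- Key bijection: non-coprime tuples of degrees `d` correspond to a constant together with
an arbitrary tuple of degrees `d - 1`. -/
noncomputable def ncEquiv (hm : 0 < m) (d : Fin m → ℕ) (hd : ∀ i, 0 < d i) :
    ↥(NCset F d) ≃ F × ↥(Tset F (fun i => d i - 1)) where
  toFun f :=
    ((Finset.univ.gcd f.1).coeff 0,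
      ⟨fun i => (Finset.univ.gcd f.1).divX * (f.1 i / Finset.univ.gcd f.1), by
        obtain ⟨f, hfT, hfnc⟩ := f
        intro i
        set g := Finset.univ.gcd f with hg
        have hfm : ∀ i, (f i).Monic := fun i => (hfT i).1
        obtain ⟨hmul, hmon, hdeg, hcop⟩ := decomp hm f hfm
        have hgm : g.Monic := gcd_monic hm f hfm
        have hg1 : 1 ≤ g.natDegree := by
          by_contra hlt
          have h0 : g.natDegree = 0 := by omega
          have : IsUnit g := by
            rw [hgm.natDegree_eq_zero.mp h0]; exact isUnit_one
          exact hfnc fun p hp => isUnit_of_dvd_unit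
            (hg ▸ Finset.dvd_gcd fun i _ => hp i) this
        have hdx : g.divX.Monic := monic_divX hgm hg1
        have hle : g.natDegree ≤ (f i).natDegree :=
          natDegree_le_of_dvd (hg ▸ Finset.gcd_dvd (Finset.mem_univ i)) (hfm i).ne_zero
        refine ⟨hdx.mul (hmon i), ?_⟩
        rw [natDegree_mul hdx.ne_zero (hmon i).ne_zero,
          natDegree_divX_eq_natDegree_tsub_one, hdeg i, (hfT i).2]
        rw [(hfT i).2] at hle
        simp only [← hg]
        omega⟩)
  invFun p :=
    ⟨fun i => (Finset.univ.gcd p.2.1 * X + C p.1) * (p.2.1 i / Finset.univ.gcd p.2.1), by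
      obtain ⟨c, f', hf'⟩ := p
      set g' := Finset.univ.gcd f' with hg'
      have hfm' : ∀ i, (f' i).Monic := fun i => (hf' i).1
      obtain ⟨hmul, hmon, hdeg, hcop⟩ := decomp hm f' hfm'
      have hgm' : g'.Monic := gcd_monic hm f' hfm'
      have hGm : (g' * X + C c).Monic := by
        refine (hgm'.mul monic_X).add_of_left ?_
        refine lt_of_le_of_lt degree_C_le ?_
        rw [← natDegree_pos_iff_degree_pos, natDegree_mul hgm'.ne_zero X_ne_zero,
          natDegree_X]
        omega
      have hGd : (g' * X + C c).natDegree = g'.natDegree + 1 := by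
        rw [natDegree_add_C, natDegree_mul hgm'.ne_zero X_ne_zero, natDegree_X]
      refine ⟨fun i => ?_, ?_⟩
      · have hle : g'.natDegree ≤ (f' i).natDegree :=
          natDegree_le_of_dvd (hg' ▸ Finset.gcd_dvd (Finset.mem_univ i)) (hfm' i).ne_zero
        refine ⟨hGm.mul (hmon i), ?_⟩
        rw [natDegree_mul hGm.ne_zero (hmon i).ne_zero, hGd, hdeg i, (hf' i).2]
        rw [(hf' i).2] at hle
        simp only [← hg'] at hle ⊢
        have := hd i
        omega
      · intro hall
        have hdvd : ∀ i, (g' * X + C c) ∣ (g' * X + C c) * (f' i / g') :=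
          fun i => Dvd.intro _ rfl
        have := hall _ hdvd
        have h0 : (g' * X + C c).natDegree = 0 := natDegree_eq_zero_of_isUnit this
        omega⟩
  left_inv := by
    rintro ⟨f, hfT, hfnc⟩
    apply Subtype.ext
    funext i
    set g := Finset.univ.gcd f with hg
    have hfm : ∀ i, (f i).Monic := fun i => (hfT i).1
    obtain ⟨hmul, hmon, hdeg, hcop⟩ := decomp hm f hfm
    have hgm : g.Monic := gcd_monic hm f hfm
    have hg1 : 1 ≤ g.natDegree := by
      by_contra hlt
      have h0 : g.natDegree = 0 := by omega
      have : IsUnit g := by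
        rw [hgm.natDegree_eq_zero.mp h0]; exact isUnit_one
      exact hfnc fun p hp => isUnit_of_dvd_unit
        (hg ▸ Finset.dvd_gcd fun i _ => hp i) this
    have hdx : g.divX.Monic := monic_divX hgm hg1
    show (Finset.univ.gcd (fun j => g.divX * (f j / g)) * X + C (g.coeff 0)) *
        ((g.divX * (f i / g)) / Finset.univ.gcd (fun j => g.divX * (f j / g))) = f i
    have hG : Finset.univ.gcd (fun j => g.divX * (f j / g)) = g.divX :=
      gcd_mul_coprime g.divX hdx (fun j => f j / g) hcop
    rw [hG, divX_mul_X_add, mul_div_cancel_left₀ _ hdx.ne_zero, hmul]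
  right_inv := by
    rintro ⟨c, f', hf'⟩
    set g' := Finset.univ.gcd f' with hg'
    have hfm' : ∀ i, (f' i).Monic := fun i => (hf' i).1
    obtain ⟨hmul, hmon, hdeg, hcop⟩ := decomp hm f' hfm'
    have hgm' : g'.Monic := gcd_monic hm f' hfm'
    have hGm : (g' * X + C c).Monic := by
      refine (hgm'.mul monic_X).add_of_left ?_
      refine lt_of_le_of_lt degree_C_le ?_
      rw [← natDegree_pos_iff_degree_pos, natDegree_mul hgm'.ne_zero X_ne_zero,
        natDegree_X]
      omega
    have hG : Finset.univ.gcd (fun j => (g' * X + C c) * (f' j / g')) = g' * X + C c :=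
      gcd_mul_coprime _ hGm (fun j => f' j / g') hcop
    have hc0 : (g' * X + C c).coeff 0 = c := by
      simp [coeff_add, mul_comm]
    have hdvX : (g' * X + C c).divX = g' := by
      have h1 := divX_mul_X_add (g' * X + C c)
      rw [hc0] at h1
      have h2 : (g' * X + C c).divX * X = g' * X := by
        exact add_right_cancel h1
      exact mul_right_cancel₀ X_ne_zero h2
    refine Prod.ext ?_ ?_
    · show (Finset.univ.gcd (fun j => (g' * X + C c) * (f' j / g'))).coeff 0 = c
      rw [hG, hc0]
    · apply Subtype.ext
      funext i
      show (Finset.univ.gcd (fun j => (g' * X + C c) * (f' j / g'))).divX *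
        (((g' * X + C c) * (f' i / g')) /
          Finset.univ.gcd (fun j => (g' * X + C c) * (f' j / g'))) = f' i
      rw [hG, hdvX, mul_div_cancel_left₀ _ hGm.ne_zero, hmul]

end Aux

section Counting
variable {F : Type*} [Field F] {m : ℕ}

noncomputable def tsetEquiv (d : Fin m → ℕ) :
    ↥(Tset F d) ≃ ∀ i, {p : F[X] // p.Monic ∧ p.natDegree = d i} :=
  Equiv.subtypePiEquivPi (p := fun i (b : F[X]) => b.Monic ∧ b.natDegree = d i)

instance (d : Fin m → ℕ) [Finite F] : Finite ↥(Tset F d) :=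
  .of_equiv _ (tsetEquiv d).symm

lemma card_Tset [Fintype F] (d : Fin m → ℕ) :
    Nat.card ↥(Tset F d) = Fintype.card F ^ (∑ i, d i) := by
  rw [Nat.card_congr (tsetEquiv d), Nat.card_pi]
  simp only [card_monic]
  rw [Finset.prod_pow_eq_pow_sum]

end Counting

/-- Over a finite field with `q` elements, for `m ≥ 2` and positive degrees `d₁, …, d_m`,
the number of `m`-tuples of monic polynomials of degrees `dᵢ` with no common non-unit factor
equals `q^(d₁+⋯+d_m) − q^(d₁+⋯+d_m−(m−1))`. -/
theorem count_coprime_monic_tuples (F : Type*) [Field F] [Fintype F] (q : ℕ)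
    (hq : Fintype.card F = q) (m : ℕ) (hm : 2 ≤ m) (d : Fin m → ℕ) (hd : ∀ i, 0 < d i) :
    Set.ncard {h : Fin m → F[X] | (∀ i, (h i).Monic ∧ (h i).natDegree = d i) ∧
        (∀ p : F[X], (∀ i, p ∣ h i) → IsUnit p)}
      = q ^ (∑ i, d i) - q ^ (∑ i, d i - (m - 1)) := by
  classical
  have hm0 : 0 < m := by omega
  set C : Set (Fin m → F[X]) := {h | (∀ i, (h i).Monic ∧ (h i).natDegree = d i) ∧
      (∀ p : F[X], (∀ i, p ∣ h i) → IsUnit p)} with hC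
  have hunion : Tset F d = C ∪ NCset F d := by
    ext h
    simp only [Tset, NCset, hC, Set.mem_setOf_eq, Set.mem_union]
    constructor
    · intro hT
      by_cases hc : ∀ p : F[X], (∀ i, p ∣ h i) → IsUnit p
      · exact Or.inl ⟨hT, hc⟩
      · exact Or.inr ⟨hT, hc⟩
    · rintro (⟨h1, _⟩ | ⟨h1, _⟩) <;> exact h1
  have hdisj : Disjoint C (NCset F d) := by
    rw [Set.disjoint_left]
    rintro h ⟨_, hcop⟩ ⟨_, hncop⟩
    exact hncop hcop
  have hTfin : (Tset F d).Finite := Set.toFinite _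
  have hCfin : C.Finite := hTfin.subset (by rw [hunion]; exact Set.subset_union_left)
  have hNCfin : (NCset F d).Finite := hTfin.subset (by rw [hunion]; exact Set.subset_union_right)
  have hsum : (Tset F d).ncard = C.ncard + (NCset F d).ncard := by
    rw [hunion, Set.ncard_union_eq hdisj hCfin hNCfin]
  have hT : (Tset F d).ncard = q ^ (∑ i, d i) := by
    rw [← Nat.card_coe_set_eq, card_Tset, hq]
  have hNC : (NCset F d).ncard = q * q ^ (∑ i, d i - m) := by
    rw [← Nat.card_coe_set_eq, Nat.card_congr (ncEquiv hm0 d hd), Nat.card_prod,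
      Nat.card_eq_fintype_card, card_Tset, hq]
    congr 1
    have : ∑ i, (d i - 1) = ∑ i, d i - m := by
      have h1 : ∑ i, ((d i - 1) + 1) = ∑ i, d i := by
        apply Finset.sum_congr rfl
        intro i _
        have := hd i
        omega
      rw [Finset.sum_add_distrib] at h1
      simp only [Finset.sum_const, Finset.card_univ, Fintype.card_fin, smul_eq_mul,
        mul_one] at h1
      omega
    rw [this]
  have hmS : m ≤ ∑ i, d i := by
    calc m = ∑ _i : Fin m, 1 := by simp
    _ ≤ ∑ i, d i := Finset.sum_le_sum fun i _ => hd i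
  have hexp : q ^ (∑ i, d i - (m - 1)) = q * q ^ (∑ i, d i - m) := by
    have h2 : ∑ i, d i - (m - 1) = (∑ i, d i - m) + 1 := by omega
    rw [h2, pow_succ, mul_comm]
  rw [hexp]
  omega
end

section
/- Let F_q be a finite field with q elements, let m ≥ 1, and let d1, …, dm, k be natural numbers with k ≤ di for all i. The number of m-tuples (h1, …, hm) of monic polynomials over F_q with deg hi = di for all i and whose (monic) greatest common divisor has degree at least k equals q^{(d1+⋯+dm) − (m−1)k}. -/
open Polynomial

namespace CountGcdAux

variable (F : Type*) [Field F] [Fintype F] [DecidableEq F]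

/-- The set of monic polynomials of degree `n`. -/
def MS (n : ℕ) : Set F[X] := {p | p.Monic ∧ p.natDegree = n}

variable {F}

lemma MS_eq_image (n : ℕ) :
    MS F n = (fun r : F[X] => r + X ^ n) '' ↑(degreeLT F n) := by
  ext p
  constructor
  · rintro ⟨hm, hd⟩
    refine ⟨p - X ^ n, ?_, by ring⟩
    rw [SetLike.mem_coe, mem_degreeLT]
    have hdeg : p.degree = ((n : ℕ) : WithBot ℕ) := by
      rw [degree_eq_natDegree hm.ne_zero, hd]
    have := degree_sub_lt (q := (X ^ n : F[X]))
      (by rw [hdeg, degree_X_pow]) hm.ne_zero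
      (by rw [hm.leadingCoeff, leadingCoeff_X_pow])
    rwa [hdeg] at this
  · rintro ⟨r, hr, rfl⟩
    rw [SetLike.mem_coe, mem_degreeLT] at hr
    have hmon : (X ^ n + r : F[X]).Monic := monic_X_pow_add hr
    have hdeg : (X ^ n + r : F[X]).degree = ((n : ℕ) : WithBot ℕ) := by
      rw [degree_add_eq_left_of_degree_lt (by rwa [degree_X_pow]), degree_X_pow]
    constructor
    · show (r + X ^ n).Monic
      rwa [add_comm]
    · show (r + X ^ n).natDegree = n
      rw [add_comm]
      exact natDegree_eq_of_degree_eq_some hdeg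

lemma degreeLT_finite (n : ℕ) : (↑(degreeLT F n) : Set F[X]).Finite := by
  have : Finite (degreeLT F n) := Finite.of_equiv _ (degreeLTEquiv F n).toEquiv.symm
  exact Set.toFinite _

lemma MS_finite (n : ℕ) : (MS F n).Finite := by
  rw [MS_eq_image]
  exact (degreeLT_finite n).image _

lemma MS_ncard (n : ℕ) : (MS F n).ncard = Fintype.card F ^ n := by
  have e : (↑(degreeLT F n) : Set F[X]) ≃ (Fin n → F) := (degreeLTEquiv F n).toEquiv
  rw [MS_eq_image, Set.ncard_image_of_injective _ (add_left_injective _),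
    ← Nat.card_coe_set_eq, Nat.card_congr e]
  simp [Nat.card_eq_fintype_card]

variable {m : ℕ}

/-- Tuples of monic polynomials with prescribed degrees. -/
def TS (d : Fin m → ℕ) : Set (Fin m → F[X]) := Set.pi Set.univ fun i => MS F (d i)

lemma mem_TS {d : Fin m → ℕ} {h : Fin m → F[X]} :
    h ∈ TS (F := F) d ↔ ∀ i, (h i).Monic ∧ (h i).natDegree = d i := by
  simp [TS, Set.mem_pi, MS]

lemma TS_finite (d : Fin m → ℕ) : (TS (F := F) d).Finite :=
  Set.Finite.pi fun _ => MS_finite _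

lemma TS_ncard (d : Fin m → ℕ) :
    (TS (F := F) d).ncard = Fintype.card F ^ (∑ i, d i) := by
  have e : TS (F := F) d ≃ ∀ i, MS F (d i) := Equiv.Set.univPi _
  rw [← Nat.card_coe_set_eq, Nat.card_congr e, Nat.card_pi]
  simp_rw [Nat.card_coe_set_eq, MS_ncard]
  rw [Finset.prod_pow_eq_pow_sum]

/-- Tuples with gcd degree at least `k`. -/
def NS (d : Fin m → ℕ) (k : ℕ) : Set (Fin m → F[X]) :=
  {h | h ∈ TS (F := F) d ∧ k ≤ (Finset.univ.gcd h).natDegree}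

/-- Tuples with gcd degree exactly `k`. -/
def ES (d : Fin m → ℕ) (k : ℕ) : Set (Fin m → F[X]) :=
  {h | h ∈ TS (F := F) d ∧ (Finset.univ.gcd h).natDegree = k}

lemma gcd_ne_zero (hm : 0 < m) {d : Fin m → ℕ} {h : Fin m → F[X]}
    (hh : h ∈ TS (F := F) d) : Finset.univ.gcd h ≠ 0 := by
  intro h0
  have := Finset.gcd_eq_zero_iff.mp h0 ⟨0, hm⟩ (Finset.mem_univ _)
  exact (mem_TS.mp hh ⟨0, hm⟩).1.ne_zero this

lemma gcd_monic (hm : 0 < m) {d : Fin m → ℕ} {h : Fin m → F[X]}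
    (hh : h ∈ TS (F := F) d) : (Finset.univ.gcd h).Monic := by
  have := Polynomial.monic_normalize (gcd_ne_zero hm hh)
  rwa [Finset.normalize_gcd] at this

lemma gcd_deg_le {d : Fin m → ℕ} {h : Fin m → F[X]}
    (hh : h ∈ TS (F := F) d) (i : Fin m) :
    (Finset.univ.gcd h).natDegree ≤ d i := by
  have := Polynomial.natDegree_le_of_dvd (Finset.gcd_dvd (Finset.mem_univ i))
    (mem_TS.mp hh i).1.ne_zero
  rwa [(mem_TS.mp hh i).2] at this

lemma NS_empty {d : Fin m → ℕ} {k : ℕ} (i : Fin m) (hik : d i < k) :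
    NS (F := F) d k = ∅ := by
  ext h
  simp only [NS, Set.mem_setOf_eq, Set.mem_empty_iff_false, iff_false, not_and]
  intro hh hk
  exact absurd (hk.trans (gcd_deg_le hh i)) (by omega)

lemma ES_empty {d : Fin m → ℕ} {k : ℕ} (i : Fin m) (hik : d i < k) :
    ES (F := F) d k = ∅ := by
  ext h
  simp only [ES, Set.mem_setOf_eq, Set.mem_empty_iff_false, iff_false, not_and]
  intro hh hk
  exact absurd (hk ▸ gcd_deg_le hh i) (by omega)

lemma NS_finite (d : Fin m → ℕ) (k : ℕ) : (NS (F := F) d k).Finite :=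
  (TS_finite d).subset fun _ hx => hx.1

lemma ES_finite (d : Fin m → ℕ) (k : ℕ) : (ES (F := F) d k).Finite :=
  (TS_finite d).subset fun _ hx => hx.1

lemma NS_ncard_split (d : Fin m → ℕ) (k : ℕ) :
    (NS (F := F) d k).ncard = (ES (F := F) d k).ncard + (NS (F := F) d (k + 1)).ncard := by
  have hsplit : NS (F := F) d k = ES (F := F) d k ∪ NS (F := F) d (k + 1) := by
    ext h
    simp only [NS, ES, Set.mem_setOf_eq, Set.mem_union]
    constructor
    · rintro ⟨h1, h2⟩
      rcases eq_or_lt_of_le h2 with h3 | h3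
      · exact Or.inl ⟨h1, h3.symm⟩
      · exact Or.inr ⟨h1, h3⟩
    · rintro (⟨h1, h2⟩ | ⟨h1, h2⟩)
      · exact ⟨h1, h2.ge⟩
      · exact ⟨h1, by omega⟩
  rw [hsplit, Set.ncard_union_eq ?_ (ES_finite d k) (NS_finite d (k + 1))]
  rw [Set.disjoint_iff_forall_ne]
  rintro a ⟨_, ha⟩ b ⟨_, hb⟩ rfl
  omega

lemma NS_sum (d : Fin m → ℕ) (B : ℕ) (hB : ∃ i, d i ≤ B) :
    ∀ n k, k + n = B + 1 →
      (NS (F := F) d k).ncard = ∑ e ∈ Finset.Icc k B, (ES (F := F) d e).ncard := by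
  intro n
  induction n with
  | zero =>
    intro k hk
    obtain ⟨i, hi⟩ := hB
    rw [show k = B + 1 by omega, NS_empty i (by omega), Finset.Icc_eq_empty (by omega)]
    simp
  | succ n ih =>
    intro k hk
    have hIcc : Finset.Icc k B = insert k (Finset.Icc (k + 1) B) := by
      ext x
      simp only [Finset.mem_Icc, Finset.mem_insert]
      omega
    rw [NS_ncard_split, ih (k + 1) (by omega), hIcc,
      Finset.sum_insert (by simp [Finset.mem_Icc])]

lemma gcd_mul_monic {g : F[X]} (hg : g.Monic) {d' : Fin m → ℕ} {u : Fin m → F[X]}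
    (hm : 0 < m) (hu : u ∈ ES (F := F) d' 0) :
    Finset.univ.gcd (fun i => g * u i) = g := by
  have h1 : Finset.univ.gcd u = 1 :=
    ((gcd_monic hm hu.1).natDegree_eq_zero).mp hu.2
  rw [Finset.gcd_mul_left, h1, mul_one, hg.normalize_eq_self]

lemma ES_shift (hm : 0 < m) (d : Fin m → ℕ) (e : ℕ) (he : ∀ i, e ≤ d i) :
    (ES (F := F) d e).ncard
      = Fintype.card F ^ e * (ES (F := F) (fun i => d i - e) 0).ncard := by
  set d' : Fin m → ℕ := fun i => d i - e with hd'
  set Φ : F[X] × (Fin m → F[X]) → (Fin m → F[X]) := fun gu i => gu.1 * gu.2 i with hΦ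
  have hgcd : ∀ gu : F[X] × (Fin m → F[X]), gu ∈ (MS F e) ×ˢ (ES (F := F) d' 0) →
      Finset.univ.gcd (Φ gu) = gu.1 := by
    rintro ⟨g, u⟩ ⟨hg, hu⟩
    exact gcd_mul_monic hg.1 hm hu
  have himg : Φ '' ((MS F e) ×ˢ (ES (F := F) d' 0)) = ES (F := F) d e := by
    apply Set.Subset.antisymm
    · rintro _ ⟨⟨g, u⟩, hgu, rfl⟩
      obtain ⟨hg, hu⟩ := hgu
      refine ⟨mem_TS.mpr fun i => ?_, ?_⟩
      · refine ⟨hg.1.mul (mem_TS.mp hu.1 i).1, ?_⟩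
        have h1 := (mem_TS.mp hu.1 i).2
        have h2 := he i
        show (g * u i).natDegree = d i
        rw [hg.1.natDegree_mul (mem_TS.mp hu.1 i).1, hg.2, h1]
        simp only [hd']
        omega
      · have hc := hgcd (g, u) ⟨hg, hu⟩
        simp only [hΦ] at hc ⊢
        rw [hc, hg.2]
    · intro h hh
      obtain ⟨hhT, hhdeg⟩ := hh
      set G := Finset.univ.gcd h with hG
      have hGm : G.Monic := gcd_monic hm hhT
      have hdvd : ∀ i, G ∣ h i := fun i => Finset.gcd_dvd (Finset.mem_univ i)
      set u : Fin m → F[X] := fun i => h i /ₘ G with hu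
      have hGu : ∀ i, G * u i = h i := by
        intro i
        obtain ⟨c, hc⟩ := hdvd i
        simp only [hu, hc, mul_divByMonic_cancel_left c hGm]
      have hum : ∀ i, (u i).Monic := by
        intro i
        have hmon := (mem_TS.mp hhT i).1
        rw [← hGu i] at hmon
        exact hGm.of_mul_monic_left hmon
      have hud : ∀ i, (u i).natDegree = d i - e := by
        intro i
        have h1 : (G * u i).natDegree = d i := by rw [hGu i]; exact (mem_TS.mp hhT i).2
        rw [hGm.natDegree_mul (hum i), hhdeg] at h1
        omega
      have huT : u ∈ TS (F := F) d' := mem_TS.mpr fun i => ⟨hum i, hud i⟩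
      have hgu1 : Finset.univ.gcd u = 1 := by
        have heq : Finset.univ.gcd (fun i => G * u i) = normalize G * Finset.univ.gcd u :=
          Finset.gcd_mul_left
        rw [hGm.normalize_eq_self] at heq
        have h2 : (fun i => G * u i) = h := funext hGu
        rw [h2, ← hG] at heq
        exact (mul_left_cancel₀ hGm.ne_zero (by rw [← heq, mul_one])).symm
      refine ⟨(G, u), ⟨⟨hGm, hhdeg⟩, huT, by rw [hgu1]; simp⟩, funext hGu⟩
  have hinj : Set.InjOn Φ ((MS F e) ×ˢ (ES (F := F) d' 0)) := by
    rintro ⟨g, u⟩ hgu ⟨g', u'⟩ hgu' heq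
    have hg : g = g' := by
      have h1 := hgcd (g, u) hgu
      have h2 := hgcd (g', u') hgu'
      rw [heq] at h1
      exact h1.symm.trans h2
    have hg0 : g ≠ 0 := hgu.1.1.ne_zero
    refine Prod.ext hg (funext fun i => ?_)
    have hfi := congrFun heq i
    simp only [hΦ] at hfi
    rw [← hg] at hfi
    exact mul_left_cancel₀ hg0 hfi
  rw [← himg, Set.ncard_image_of_injOn hinj, ← Nat.card_coe_set_eq,
    Nat.card_congr (Equiv.Set.prod _ _), Nat.card_prod,
    Nat.card_coe_set_eq, Nat.card_coe_set_eq, MS_ncard]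

lemma NS_zero (d : Fin m → ℕ) : NS (F := F) d 0 = TS (F := F) d := by
  ext h; simp [NS]

lemma ES_term (hm : 0 < m) (d : Fin m → ℕ) (k : ℕ) (hk : ∀ i, k ≤ d i) (e' : ℕ) :
    (ES (F := F) d (e' + k)).ncard
      = Fintype.card F ^ k * (ES (F := F) (fun i => d i - k) e').ncard := by
  by_cases hcase : ∀ i, e' + k ≤ d i
  · rw [ES_shift hm d (e' + k) hcase,
      ES_shift hm (fun i => d i - k) e'
        (fun i => by show e' ≤ d i - k; have := hcase i; omega)]
    have hfe : (fun i => d i - k - e') = (fun i => d i - (e' + k)) :=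
      funext fun i => by omega
    rw [hfe, pow_add]
    ring
  · push_neg at hcase
    obtain ⟨i, hi⟩ := hcase
    rw [ES_empty i hi, ES_empty (d := fun i => d i - k) i
      (by show d i - k < e'; have := hk i; omega)]
    simp

end CountGcdAux

open CountGcdAux in
/-- Over a finite field with `q` elements, for `m ≥ 1` and `k ≤ dᵢ` for all `i`, the number of
`m`-tuples of monic polynomials of degrees `d₁, …, d_m` whose monic gcd has degree at least `k`
equals `q^((d₁+⋯+d_m) − (m−1)·k)`. -/
theorem count_gcd_deg_ge_tuples (F : Type*) [Field F] [Fintype F] [DecidableEq F] (q : ℕ)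
    (hq : Fintype.card F = q) (m : ℕ) (hm : 1 ≤ m) (d : Fin m → ℕ) (k : ℕ)
    (hk : ∀ i, k ≤ d i) :
    Set.ncard {h : Fin m → F[X] | (∀ i, (h i).Monic ∧ (h i).natDegree = d i) ∧
        k ≤ (Finset.univ.gcd h).natDegree}
      = q ^ ((∑ i, d i) - (m - 1) * k) := by
  subst hq
  have hset : {h : Fin m → F[X] | (∀ i, (h i).Monic ∧ (h i).natDegree = d i) ∧
      k ≤ (Finset.univ.gcd h).natDegree} = NS (F := F) d k := by
    ext h; simp [NS, mem_TS]
  rw [hset]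
  set q := Fintype.card F with hq
  set i₀ : Fin m := ⟨0, hm⟩ with hi₀
  set B := d i₀ with hB
  have hkB : k ≤ B := hk i₀
  set d' : Fin m → ℕ := fun i => d i - k with hd'
  have h1 : (NS (F := F) d k).ncard = ∑ e ∈ Finset.Icc k B, (ES (F := F) d e).ncard :=
    NS_sum d B ⟨i₀, le_rfl⟩ (B + 1 - k) k (by omega)
  have h2 : (NS (F := F) d' 0).ncard
      = ∑ e ∈ Finset.Icc 0 (B - k), (ES (F := F) d' e).ncard :=
    NS_sum d' (B - k) ⟨i₀, le_rfl⟩ (B - k + 1) 0 (by omega)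
  have hmap : Finset.Icc k B = (Finset.Icc 0 (B - k)).map
      ⟨fun x => x + k, add_left_injective k⟩ := by
    ext x
    simp only [Finset.mem_Icc, Finset.mem_map, Function.Embedding.coeFn_mk]
    constructor
    · intro hx; exact ⟨x - k, by omega, by omega⟩
    · rintro ⟨y, hy, rfl⟩; omega
  have h3 : (NS (F := F) d k).ncard = q ^ k * (NS (F := F) d' 0).ncard := by
    rw [h1, h2, hmap, Finset.sum_map, Finset.mul_sum]
    exact Finset.sum_congr rfl fun e' _ => ES_term hm d k hk e'
  rw [h3, NS_zero, TS_ncard, ← pow_add]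
  congr 1
  have hsum : (∑ i, d' i) + m * k = ∑ i, d i := by
    have : ∀ i : Fin m, d' i + k = d i := fun i => by simp only [hd']; have := hk i; omega
    calc (∑ i, d' i) + m * k = ∑ i : Fin m, (d' i + k) := by
          rw [Finset.sum_add_distrib, Finset.sum_const, Finset.card_univ,
            Fintype.card_fin, smul_eq_mul]
        _ = ∑ i, d i := Finset.sum_congr rfl fun i _ => this i
  have hmk : k ≤ m * k := Nat.le_mul_of_pos_left k hm
  have hmk2 : (m - 1) * k = m * k - k := by
    cases m with
    | zero => omega
    | succ m' => simp [Nat.succ_sub_one, Nat.succ_mul]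
  omega
end

section
/- Let F_q be a finite field with q elements, let m ≥ 2, and let d1, …, dm, k be natural numbers with k < di for all i. The number of m-tuples (h1, …, hm) of monic polynomials over F_q with deg hi = di for all i and whose (monic) greatest common divisor has degree exactly k equals q^k · (q^{Σ(di−k)} − q^{Σ(di−k)−(m−1)}), where Σ(di−k) = (d1−k) + ⋯ + (dm−k). -/
set_option linter.unusedSectionVars false
open Polynomial Finset

section
variable {F : Type*} [Field F] [Fintype F] [DecidableEq F] {m : ℕ}

/-- The set of tuples of monic polynomials of degrees `e i` whose gcd has degree `j`. -/
def Tup (e : Fin m → ℕ) (j : ℕ) : Set (Fin m → F[X]) :=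
  {h | (∀ i, (h i).Monic ∧ (h i).natDegree = e i) ∧ (Finset.univ.gcd h).natDegree = j}

/-- Monic polynomials of degree `n` as a subtype. -/
abbrev MonP (F : Type*) [Field F] (n : ℕ) := {p : F[X] // p.Monic ∧ p.natDegree = n}

noncomputable instance (n : ℕ) : Fintype (MonP F n) :=
  Fintype.ofEquiv (Fin n → F)
    (((monicEquivDegreeLT n).trans (degreeLTEquiv F n).toEquiv).symm)

lemma card_MonP (n : ℕ) : Nat.card (MonP F n) = Fintype.card F ^ n := by
  rw [Nat.card_eq_fintype_card,
    Fintype.card_congr ((monicEquivDegreeLT n).trans (degreeLTEquiv F n).toEquiv)]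
  simp

/-- The set of tuples of monic polynomials of degrees `e i`. -/
def MTup (e : Fin m → ℕ) : Set (Fin m → F[X]) :=
  {h | ∀ i, (h i).Monic ∧ (h i).natDegree = e i}

def mtupEquiv (e : Fin m → ℕ) : MTup (F := F) e ≃ ∀ i, MonP F (e i) where
  toFun h := fun i => ⟨h.1 i, h.2 i⟩
  invFun g := ⟨fun i => (g i).1, fun i => (g i).2⟩
  left_inv _ := rfl
  right_inv _ := rfl

instance (e : Fin m → ℕ) : Finite (MTup (F := F) e) :=
  Finite.of_equiv _ (mtupEquiv e).symm

lemma card_MTup (e : Fin m → ℕ) :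
    Nat.card (MTup (F := F) e) = Fintype.card F ^ (∑ i, e i) := by
  rw [Nat.card_congr (mtupEquiv e), Nat.card_pi]
  simp_rw [card_MonP]
  rw [Finset.prod_pow_eq_pow_sum]

lemma Tup_subset (e : Fin m → ℕ) (j : ℕ) : Tup (F := F) e j ⊆ MTup e := fun _ h => h.1

instance (e : Fin m → ℕ) (j : ℕ) : Finite (Tup (F := F) e j) :=
  Set.Finite.to_subtype ((Set.toFinite (MTup (F := F) e)).subset (Tup_subset e j))

end

section
variable {F : Type*} [Field F] [Fintype F] [DecidableEq F] {m : ℕ}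

lemma gcd_monic_of_mtup {e : Fin m → ℕ} {h : Fin m → F[X]} (hh : h ∈ MTup e) (hm0 : 0 < m) :
    (Finset.univ.gcd h).Monic := by
  have hne : Finset.univ.gcd h ≠ 0 := fun h0 =>
    ((hh ⟨0, hm0⟩).1.ne_zero) (Finset.gcd_eq_zero_iff.1 h0 ⟨0, hm0⟩ (Finset.mem_univ _))
  rw [← Finset.normalize_gcd]; exact monic_normalize hne

lemma gcd_mul_left_monic {g : F[X]} (hg : g.Monic) (t : Fin m → F[X]) :
    Finset.univ.gcd (fun i => g * t i) = g * Finset.univ.gcd t := by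
  rw [Finset.gcd_mul_left, hg.normalize_eq_self]

lemma gcd_eq_one_of_tup0 {e : Fin m → ℕ} {h : Fin m → F[X]} (hh : h ∈ Tup e 0) (hm0 : 0 < m) :
    Finset.univ.gcd h = 1 :=
  ((gcd_monic_of_mtup hh.1 hm0).natDegree_eq_zero).1 hh.2

/-- The key bijection: tuples with gcd of degree `j` correspond to pairs of a monic polynomial
of degree `j` and a coprime tuple of degrees `e i - j`. -/
noncomputable def tupEquivProd (e : Fin m → ℕ) (j : ℕ) (hm0 : 0 < m) (hj : ∀ i, j ≤ e i) :
    Tup (F := F) e j ≃ MonP F j × Tup (F := F) (fun i => e i - j) 0 where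
  toFun h := by
    have hg : (Finset.univ.gcd h.1).Monic := gcd_monic_of_mtup h.2.1 hm0
    have hEq : ∀ i, Finset.univ.gcd h.1 * (h.1 i / Finset.univ.gcd h.1) = h.1 i := fun i =>
      EuclideanDomain.mul_div_cancel' hg.ne_zero (Finset.gcd_dvd (Finset.mem_univ i))
    have hmon : ∀ i, (h.1 i / Finset.univ.gcd h.1).Monic := fun i =>
      hg.of_mul_monic_left (by rw [hEq i]; exact (h.2.1 i).1)
    refine ⟨⟨Finset.univ.gcd h.1, hg, h.2.2⟩,
      ⟨fun i => h.1 i / Finset.univ.gcd h.1, ?_, ?_⟩⟩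
    · intro i
      refine ⟨hmon i, ?_⟩
      have hds : (Finset.univ.gcd h.1).natDegree + (h.1 i / Finset.univ.gcd h.1).natDegree
          = e i := by
        rw [← hg.natDegree_mul (hmon i), hEq i, (h.2.1 i).2]
      have := h.2.2
      simp only
      omega
    · have key : Finset.univ.gcd h.1 * Finset.univ.gcd (fun i => h.1 i / Finset.univ.gcd h.1)
          = Finset.univ.gcd h.1 * 1 := by
        rw [← gcd_mul_left_monic hg, mul_one]
        congr 1
        funext i
        exact hEq i
      rw [mul_left_cancel₀ hg.ne_zero key, natDegree_one]
  invFun p := ⟨fun i => p.1.1 * p.2.1 i, by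
    obtain ⟨⟨g, hg, hgd⟩, ⟨t, ht, htd⟩⟩ := p
    have hgcd : Finset.univ.gcd (fun i => g * t i) = g := by
      rw [gcd_mul_left_monic hg, gcd_eq_one_of_tup0 ⟨ht, htd⟩ hm0, mul_one]
    refine ⟨fun i => ⟨hg.mul (ht i).1, ?_⟩, by rw [hgcd, hgd]⟩
    · have h2 : (t i).natDegree = e i - j := (ht i).2
      rw [hg.natDegree_mul (ht i).1, hgd, h2]
      have := hj i; omega⟩
  left_inv h := Subtype.ext <| funext fun i => by
    have := EuclideanDomain.mul_div_cancel'
      (gcd_monic_of_mtup h.2.1 hm0).ne_zero (Finset.gcd_dvd (Finset.mem_univ i))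
    exact this
  right_inv p := by
    obtain ⟨⟨g, hg, hgd⟩, ⟨t, ht, htd⟩⟩ := p
    have hgcd : Finset.univ.gcd (fun i => g * t i) = g := by
      rw [gcd_mul_left_monic hg, gcd_eq_one_of_tup0 ⟨ht, htd⟩ hm0, mul_one]
    refine Prod.ext (Subtype.ext ?_) (Subtype.ext ?_)
    · exact hgcd
    · funext i
      simp only
      rw [hgcd]
      exact mul_left_cancel₀ hg.ne_zero
        (EuclideanDomain.mul_div_cancel' hg.ne_zero (Dvd.intro (t i) rfl))

end

lemma card_sigma_fin {n : ℕ} (f : Fin n → Type*) [∀ i, Finite (f i)] :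
    Nat.card (Σ i, f i) = ∑ i, Nat.card (f i) := by
  classical
  have := fun i => Fintype.ofFinite (f i)
  simp [Nat.card_eq_fintype_card, Fintype.card_sigma]

section
variable {F : Type*} [Field F] [Fintype F] [DecidableEq F] {m : ℕ}

lemma card_Tup_eq (e : Fin m → ℕ) (j : ℕ) (hm0 : 0 < m) (hj : ∀ i, j ≤ e i) :
    Nat.card (Tup (F := F) e j)
      = Fintype.card F ^ j * Nat.card (Tup (F := F) (fun i => e i - j) 0) := by
  rw [Nat.card_congr (tupEquivProd e j hm0 hj), Nat.card_prod, card_MonP]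

noncomputable def partEquiv (e : Fin m → ℕ) (E : ℕ) (i0 : Fin m) (hE : e i0 ≤ E) :
    MTup (F := F) e ≃ Σ j : Fin (E + 1), Tup (F := F) e j where
  toFun h := ⟨⟨(Finset.univ.gcd h.1).natDegree, Nat.lt_succ_of_le <|
      le_trans (le_trans (natDegree_le_of_dvd (Finset.gcd_dvd (Finset.mem_univ i0))
        (h.2 i0).1.ne_zero) (le_of_eq (h.2 i0).2)) hE⟩, ⟨h.1, h.2, rfl⟩⟩
  invFun s := ⟨s.2.1, s.2.2.1⟩
  left_inv _ := rfl
  right_inv := by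
    rintro ⟨⟨j, hjE⟩, h, hh, hdeg⟩
    simp only [Fin.val_mk] at hdeg
    subst hdeg
    rfl

lemma card_partition (e : Fin m → ℕ) (E : ℕ) (i0 : Fin m) (hE : e i0 ≤ E) :
    Fintype.card F ^ (∑ i, e i) = ∑ j ∈ Finset.range (E + 1), Nat.card (Tup (F := F) e j) := by
  rw [← card_MTup, Nat.card_congr (partEquiv e E i0 hE), card_sigma_fin]
  exact Fin.sum_univ_eq_sum_range (fun j => Nat.card (Tup (F := F) e j)) (E + 1)

end

section
variable {F : Type*} [Field F] [Fintype F] [DecidableEq F] {m : ℕ}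

lemma card_Tup0_exists_zero (e : Fin m → ℕ) (_hm0 : 0 < m) (i0 : Fin m) (h0 : e i0 = 0) :
    Nat.card (Tup (F := F) e 0) = Fintype.card F ^ (∑ i, e i) := by
  rw [← card_MTup]
  have hset : Tup (F := F) e 0 = MTup e := by
    apply Set.ext
    intro h
    refine ⟨fun hh => hh.1, fun hh => ⟨hh, ?_⟩⟩
    have h1 : h i0 = 1 := by
      have := (hh i0).1.natDegree_eq_zero
      rw [(hh i0).2, h0] at this
      exact this.1 rfl
    have hdvd : Finset.univ.gcd h ∣ 1 := h1 ▸ Finset.gcd_dvd (Finset.mem_univ i0)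
    exact natDegree_eq_zero_of_isUnit (isUnit_of_dvd_one hdvd)
  rw [hset]

lemma card_Tup0_coprime (hm : 2 ≤ m) :
    ∀ E : ℕ, ∀ e : Fin m → ℕ, (∀ i, 1 ≤ e i) → (∀ i, E ≤ e i) → (∀ iE : Fin m, e iE = E →
    Nat.card (Tup (F := F) e 0) + Fintype.card F ^ (∑ i, e i - (m - 1))
      = Fintype.card F ^ (∑ i, e i)) := by
  intro E
  induction E using Nat.strong_induction_on with
  | _ E IH =>
  intro e he hEle iE hiE
  set q := Fintype.card F with hqdef
  have hm0 : 0 < m := by omega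
  have hE1 : 1 ≤ E := hiE ▸ he iE
  set S := ∑ i, e i with hS
  have hmES : m * E ≤ S := by
    calc m * E = ∑ _i : Fin m, E := by simp [mul_comm]
    _ ≤ S := Finset.sum_le_sum fun i _ => hEle i
  have hEmE : E ≤ m * E := Nat.le_mul_of_pos_left E hm0
  -- partition of all monic tuples by gcd degree
  have hpart := card_partition (F := F) e E iE (le_of_eq hiE)
  rw [Finset.sum_range_succ', ← hqdef, ← hS] at hpart
  -- the sum over positive gcd degrees telescopes
  have hsum : ∑ j ∈ Finset.range E, Nat.card (Tup (F := F) e (j + 1)) = q ^ (S - (m - 1)) := by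
    have hsub : ∀ j, j + 1 ≤ E → ∑ i, (e i - (j + 1)) = S - m * (j + 1) := by
      intro j hj
      rw [Finset.sum_tsub_distrib _ (fun i _ => le_trans hj (hEle i))]
      simp [hS]
    set f : ℕ → ℤ := fun j => if j < E then (q : ℤ) ^ (S - (m - 1) * (j + 1)) else 0 with hf
    have hterm : ∀ j ∈ Finset.range E,
        (Nat.card (Tup (F := F) e (j + 1)) : ℤ) = f j - f (j + 1) := by
      intro j hjr
      rw [Finset.mem_range] at hjr
      have hj1E : j + 1 ≤ E := hjr
      have hjle : ∀ i, j + 1 ≤ e i := fun i => le_trans hj1E (hEle i)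
      have hmj1 : m * (j + 1) ≤ S := le_trans (Nat.mul_le_mul_left m hj1E) hmES
      rw [card_Tup_eq e (j + 1) hm0 hjle]
      rcases eq_or_lt_of_le hj1E with hcase | hcase
      · -- j + 1 = E : the quotient tuple has a zero degree
        have hzero : (fun i => e i - (j + 1)) iE = 0 := by
          show e iE - (j + 1) = 0; omega
        rw [card_Tup0_exists_zero _ hm0 iE hzero, hsub j hj1E]
        have hfj : f j = (q : ℤ) ^ (S - (m - 1) * E) := by
          simp only [hf]
          rw [if_pos hjr, hcase]
        have hfj1 : f (j + 1) = 0 := by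
          simp only [hf, hcase]
          rw [if_neg (lt_irrefl E)]
        rw [hfj, hfj1, sub_zero]
        push_cast
        rw [← pow_add]
        congr 1
        rw [hcase]
        have h1 : (m - 1) * E = m * E - E := by rw [Nat.sub_mul, one_mul]
        rw [h1]
        generalize hA : m * E = a at hmES hEmE ⊢
        omega
      · -- j + 1 < E : use the induction hypothesis
        have hE' : E - (j + 1) < E := by omega
        have hIH := IH (E - (j + 1)) hE' (fun i => e i - (j + 1))
          (fun i => by show 1 ≤ e i - (j + 1); have := hEle i; omega)
          (fun i => by show E - (j + 1) ≤ e i - (j + 1); have := hEle i; omega)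
          iE (by show e iE - (j + 1) = E - (j + 1); omega)
        rw [hsub j hj1E] at hIH
        have hf1 : f j = (q : ℤ) ^ (S - (m - 1) * (j + 1)) := by
          simp only [hf]; rw [if_pos hjr]
        have hf2 : f (j + 1) = (q : ℤ) ^ (S - (m - 1) * (j + 2)) := by
          simp only [hf]; rw [if_pos hcase]
        rw [hf1, hf2]
        have hq1 : (Nat.card (Tup (F := F) (fun i => e i - (j + 1)) 0) : ℤ)
            = (q : ℤ) ^ (S - m * (j + 1)) - (q : ℤ) ^ (S - m * (j + 1) - (m - 1)) := by
          have := congrArg (Nat.cast : ℕ → ℤ) hIH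
          push_cast at this
          linarith
        push_cast
        rw [hq1, mul_sub, ← pow_add, ← pow_add]
        have hmj2 : m * (j + 2) ≤ S := le_trans (Nat.mul_le_mul_left m hcase) hmES
        have hb1 : (m - 1) * (j + 1) = m * (j + 1) - (j + 1) := by
          rw [Nat.sub_mul, one_mul]
        have hb2 : (m - 1) * (j + 2) = m * (j + 2) - (j + 2) := by
          rw [Nat.sub_mul, one_mul]
        have hb3 : m * (j + 2) = m * (j + 1) + m := by ring
        have haj : j + 1 ≤ m * (j + 1) := Nat.le_mul_of_pos_left (j + 1) hm0
        have hc1 : j + 1 + (S - m * (j + 1)) = S - (m - 1) * (j + 1) := by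
          rw [hb1]
          generalize hA : m * (j + 1) = a at hmj1 haj ⊢
          omega
        have hc2 : j + 1 + (S - m * (j + 1) - (m - 1)) = S - (m - 1) * (j + 2) := by
          rw [hb3] at hmj2
          rw [hb2, hb3]
          generalize hA : m * (j + 1) = a at hmj1 hmj2 haj ⊢
          omega
        rw [hc1, hc2]
    have htel : (∑ j ∈ Finset.range E, (Nat.card (Tup (F := F) e (j + 1)) : ℤ))
        = f 0 - f E := by
      rw [Finset.sum_congr rfl hterm]
      exact Finset.sum_range_sub' f E
    have hf0 : f 0 = (q : ℤ) ^ (S - (m - 1)) := by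
      simp only [hf]
      rw [if_pos (by omega : 0 < E)]
      congr 1
      omega
    have hfE : f E = 0 := by simp [hf]
    rw [hf0, hfE, sub_zero] at htel
    exact_mod_cast (by push_cast; exact htel :
      ((∑ j ∈ Finset.range E, Nat.card (Tup (F := F) e (j + 1)) : ℕ) : ℤ)
        = ((q ^ (S - (m - 1)) : ℕ) : ℤ))
  omega

end

/-- Over a finite field with `q` elements, for `m ≥ 2` and `k < dᵢ` for all `i`, the number of
`m`-tuples of monic polynomials of degrees `d₁, …, d_m` whose monic gcd has degree exactly `k`
equals `q^k · (q^(Σ(dᵢ−k)) − q^(Σ(dᵢ−k)−(m−1)))`. -/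
theorem count_gcd_deg_eq_tuples (F : Type*) [Field F] [Fintype F] [DecidableEq F] (q : ℕ)
    (hq : Fintype.card F = q) (m : ℕ) (hm : 2 ≤ m) (d : Fin m → ℕ) (k : ℕ)
    (hk : ∀ i, k < d i) :
    Set.ncard {h : Fin m → F[X] | (∀ i, (h i).Monic ∧ (h i).natDegree = d i) ∧
        (Finset.univ.gcd h).natDegree = k}
      = q ^ k * (q ^ (∑ i, (d i - k)) - q ^ ((∑ i, (d i - k)) - (m - 1))) := by
  subst hq
  have hm0 : 0 < m := by omega
  haveI : Nonempty (Fin m) := ⟨⟨0, hm0⟩⟩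
  have hkd : ∀ i, k ≤ d i := fun i => (hk i).le
  have h1 : Set.ncard {h : Fin m → F[X] | (∀ i, (h i).Monic ∧ (h i).natDegree = d i) ∧
      (Finset.univ.gcd h).natDegree = k} = Nat.card (Tup (F := F) d k) :=
    (Nat.card_coe_set_eq (Tup (F := F) d k)).symm
  rw [h1, card_Tup_eq d k hm0 hkd]
  have hne : (Finset.univ : Finset (Fin m)).Nonempty := Finset.univ_nonempty
  obtain ⟨i0, -, hi0⟩ := Finset.exists_mem_eq_inf' hne (fun i => d i - k)
  have hcop := card_Tup0_coprime (F := F) hm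
    (Finset.univ.inf' hne (fun i => d i - k)) (fun i => d i - k)
    (fun i => Nat.le_sub_of_add_le (Nat.add_comm k 1 ▸ hk i))
    (fun i => Finset.inf'_le _ (Finset.mem_univ i)) i0 hi0.symm
  beta_reduce at hcop
  rw [Nat.eq_sub_of_add_eq hcop]
end

section
/- Let F_q be a finite field with q elements and let a, b, n be positive natural numbers. The number of pairs (u, v) of nonzero coprime polynomials over F_q satisfying deg u ≤ a·n, deg v ≤ b·n, and (deg u = a·n or deg v = b·n), equals (q−1)·(q^{(a+b)n+1} − q^{(a+b)n−1}). -/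
open Polynomial

namespace CountTAux
set_option linter.unusedSectionVars false

variable (F : Type*) [Field F] [Fintype F]

/-- monic polynomials of given degree -/
def Mo (d : ℕ) : Set F[X] := {p | p.Monic ∧ p.natDegree = d}

/-- coprime pairs of monic polynomials of given degrees -/
def Cp (i j : ℕ) : Set (F[X] × F[X]) :=
  {p | p.1 ∈ Mo F i ∧ p.2 ∈ Mo F j ∧ IsCoprime p.1 p.2}

variable {F}

lemma ncard_prod {α β : Type*} (s : Set α) (t : Set β) :
    (s ×ˢ t).ncard = s.ncard * t.ncard := by
  rw [← Nat.card_coe_set_eq, Nat.card_congr (Equiv.Set.prod s t), Nat.card_prod,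
    Nat.card_coe_set_eq, Nat.card_coe_set_eq]

lemma ncard_biUnion {ι α : Type*} (s : Finset ι) (t : ι → Set α)
    (hfin : ∀ i ∈ s, (t i).Finite)
    (hdisj : ∀ i ∈ s, ∀ j ∈ s, i ≠ j → Disjoint (t i) (t j)) :
    (⋃ i ∈ s, t i).ncard = ∑ i ∈ s, (t i).ncard := by
  classical
  induction s using Finset.induction with
  | empty => simp
  | @insert a s ha ih =>
    have hfin' : (⋃ i ∈ s, t i).Finite := by
      rw [← Finset.set_biUnion_coe]
      exact Set.Finite.biUnion s.finite_toSet
        (fun i hi => hfin i (Finset.mem_insert_of_mem hi))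
    have hdisj' : Disjoint (t a) (⋃ i ∈ s, t i) := by
      simp only [Set.disjoint_iUnion_right]
      intro i hi
      exact hdisj a (Finset.mem_insert_self a s) i (Finset.mem_insert_of_mem hi)
        (fun h => ha (h ▸ hi))
    rw [Finset.set_biUnion_insert, Finset.sum_insert ha,
      Set.ncard_union_eq hdisj' (hfin a (Finset.mem_insert_self a s)) hfin',
      ih (fun i hi => hfin i (Finset.mem_insert_of_mem hi))
        (fun i hi j hj hij => hdisj i (Finset.mem_insert_of_mem hi) j
          (Finset.mem_insert_of_mem hj) hij)]


lemma degLT_eq (n : ℕ) : {p : F[X] | p.degree < (n : ℕ)} = ↑(degreeLT F n) := by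
  ext p; simp [Polynomial.mem_degreeLT]


lemma finite_degLT (n : ℕ) : {p : F[X] | p.degree < (n : ℕ)}.Finite := by
  rw [degLT_eq]
  have : Finite (degreeLT F n) := Finite.of_equiv _ (degreeLTEquiv F n).toEquiv.symm
  exact (degreeLT F n : Set F[X]).toFinite

lemma ncard_degLT (n : ℕ) :
    {p : F[X] | p.degree < (n : ℕ)}.ncard = Fintype.card F ^ n := by
  have h : Nat.card {p : F[X] | p.degree < (n : ℕ)} = Nat.card (Fin n → F) :=
    Nat.card_congr ((Equiv.setCongr (degLT_eq n)).trans (degreeLTEquiv F n).toEquiv)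
  rw [← Nat.card_coe_set_eq, h]
  simp [Nat.card_eq_fintype_card]


lemma Mo_eq_image (d : ℕ) :
    Mo F d = (fun p => X ^ d + p) '' {p : F[X] | p.degree < (d : ℕ)} := by
  ext m
  constructor
  · rintro ⟨hm, hd⟩
    have hdm : m.degree = (d : ℕ) := by
      rw [degree_eq_natDegree hm.ne_zero, hd]
    refine ⟨m - X ^ d, ?_, by ring⟩
    have h := degree_sub_lt (p := m) (q := X ^ d) (by rw [hdm, degree_X_pow]) hm.ne_zero
      (by simp [hm.leadingCoeff, leadingCoeff_X_pow])
    simpa [hdm] using h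
  · rintro ⟨p, hp, rfl⟩
    have hp' : p.degree < (d : ℕ) := hp
    have hm : Monic (X ^ d + p) := monic_X_pow_add hp'
    have hdeg : (X ^ d + p).degree = ((d : ℕ) : WithBot ℕ) := by
      rw [degree_add_eq_left_of_degree_lt (by rwa [degree_X_pow]), degree_X_pow]
    exact ⟨hm, natDegree_eq_of_degree_eq_some hdeg⟩


lemma Mo_finite (d : ℕ) : (Mo F d).Finite := by
  rw [Mo_eq_image]
  exact (finite_degLT d).image _

lemma ncard_Mo (d : ℕ) : (Mo F d).ncard = Fintype.card F ^ d := by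
  rw [Mo_eq_image, Set.ncard_image_of_injective _ (add_right_injective _), ncard_degLT]


lemma Cp_finite (i j : ℕ) : (Cp F i j).Finite := by
  refine Set.Finite.subset ((Mo_finite (F := F) i).prod (Mo_finite (F := F) j)) ?_
  rintro ⟨u, v⟩ ⟨hu, hv, _⟩
  exact ⟨hu, hv⟩

/-- the multiplication map used in the gcd stratification -/
noncomputable def mul2 : F[X] × (F[X] × F[X]) → F[X] × F[X] :=
  fun x => (x.1 * x.2.1, x.1 * x.2.2)


lemma gcd_eq_of [DecidableEq F] (g u v : F[X]) (hg : g.Monic) (huv : IsCoprime u v) :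
    gcd (g * u) (g * v) = g := by
  have h1 : gcd u v = 1 := by
    rw [← normalize_gcd, normalize_eq_one]
    exact (gcd_isUnit_iff u v).2 huv
  rw [gcd_mul_left, h1, mul_one, hg.normalize_eq_self]


lemma gcd_of_mem {d i j : ℕ} [DecidableEq F] {x : F[X] × F[X]}
    (hx : x ∈ mul2 '' ((Mo F d) ×ˢ Cp F i j)) :
    (gcd x.1 x.2).Monic ∧ (gcd x.1 x.2).natDegree = d := by
  obtain ⟨⟨g, u, v⟩, ⟨⟨hgm, hgd⟩, ⟨hum, _⟩, ⟨hvm, _⟩, huv⟩, rfl⟩ := hx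
  simp only [mul2]
  rw [gcd_eq_of g u v hgm huv]
  exact ⟨hgm, hgd⟩


lemma piece_injOn [DecidableEq F] (d i j : ℕ) :
    Set.InjOn mul2 ((Mo F d) ×ˢ Cp F i j : Set (F[X] × (F[X] × F[X]))) := by
  rintro ⟨g, u, v⟩ ⟨⟨hgm, -⟩, ⟨-, -⟩, ⟨-, -⟩, hcop⟩
    ⟨g', u', v'⟩ ⟨⟨hgm', -⟩, ⟨-, -⟩, ⟨-, -⟩, hcop'⟩ heq
  simp only [mul2, Prod.ext_iff] at heq
  obtain ⟨h1, h2⟩ := heq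
  have hgg : g = g' := by
    have e1 : gcd (g * u) (g * v) = g := gcd_eq_of g u v hgm hcop
    have e2 : gcd (g' * u') (g' * v') = g' := gcd_eq_of g' u' v' hgm' hcop'
    rw [← e1, ← e2, h1, h2]
  subst hgg
  have hg0 : g ≠ 0 := hgm.ne_zero
  obtain rfl : u = u' := mul_left_cancel₀ hg0 h1
  obtain rfl : v = v' := mul_left_cancel₀ hg0 h2
  rfl

lemma strat (i j : ℕ) :
    ((Mo F i) ×ˢ (Mo F j) : Set (F[X] × F[X])) =
      ⋃ d ∈ Finset.range (min i j + 1), mul2 '' ((Mo F d) ×ˢ Cp F (i - d) (j - d)) := by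
  classical
  ext ⟨u, v⟩
  simp only [Set.mem_prod, Set.mem_iUnion, Finset.mem_range, Set.mem_image]
  constructor
  · rintro ⟨⟨hum, hud⟩, hvm, hvd⟩
    have hu0 : u ≠ 0 := hum.ne_zero
    obtain ⟨g, hgdef⟩ : ∃ g : F[X], g = gcd u v := ⟨_, rfl⟩
    have hg0 : g ≠ 0 := by
      rw [hgdef, Ne, gcd_eq_zero_iff]
      rintro ⟨rfl, -⟩; exact hu0 rfl
    have hgm : g.Monic := by
      have := Polynomial.monic_normalize (p := g) hg0
      rwa [hgdef, normalize_gcd, ← hgdef] at this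
    obtain ⟨u₁, hu₁⟩ : g ∣ u := hgdef ▸ gcd_dvd_left u v
    obtain ⟨v₁, hv₁⟩ : g ∣ v := hgdef ▸ gcd_dvd_right u v
    have hu₁m : u₁.Monic := hgm.of_mul_monic_left (hu₁ ▸ hum)
    have hv₁m : v₁.Monic := hgm.of_mul_monic_left (hv₁ ▸ hvm)
    have hcop : IsCoprime u₁ v₁ := by
      have hkey : gcd (g * u₁) (g * v₁) = g * gcd u₁ v₁ := by
        rw [gcd_mul_left, hgm.normalize_eq_self]
      have hkey2 : gcd (g * u₁) (g * v₁) = g * 1 := by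
        rw [← hu₁, ← hv₁, ← hgdef, mul_one]
      have : (1 : F[X]) = gcd u₁ v₁ := mul_left_cancel₀ hg0 (hkey2.symm.trans hkey)
      exact (gcd_isUnit_iff u₁ v₁).1 (this ▸ isUnit_one)
    have hdu : g.natDegree + u₁.natDegree = i := by
      rw [← natDegree_mul hg0 hu₁m.ne_zero, ← hu₁, hud]
    have hdv : g.natDegree + v₁.natDegree = j := by
      rw [← natDegree_mul hg0 hv₁m.ne_zero, ← hv₁, hvd]
    have e1 : u₁.natDegree = i - g.natDegree := by omega
    have e2 : v₁.natDegree = j - g.natDegree := by omega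
    refine ⟨g.natDegree, by omega, (g, (u₁, v₁)),
      ⟨⟨hgm, rfl⟩, ⟨hu₁m, e1⟩, ⟨hv₁m, e2⟩, hcop⟩, ?_⟩
    simp only [mul2, ← hu₁, ← hv₁]
  · rintro ⟨d, hd, ⟨g, u₁, v₁⟩, ⟨⟨hgm, hgd⟩, ⟨hum, hud⟩, ⟨hvm, hvd⟩, -⟩, heq⟩
    obtain ⟨rfl, rfl⟩ : g * u₁ = u ∧ g * v₁ = v := by
      simpa [mul2, Prod.ext_iff] using heq
    refine ⟨⟨hgm.mul hum, ?_⟩, hgm.mul hvm, ?_⟩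
    · rw [natDegree_mul hgm.ne_zero hum.ne_zero, hgd, hud]; omega
    · rw [natDegree_mul hgm.ne_zero hvm.ne_zero, hgd, hvd]; omega

lemma key (i j : ℕ) :
    Fintype.card F ^ (i + j) =
      ∑ d ∈ Finset.range (min i j + 1),
        Fintype.card F ^ d * (Cp F (i - d) (j - d)).ncard := by
  classical
  have h1 : ((Mo F i) ×ˢ (Mo F j) : Set (F[X] × F[X])).ncard = Fintype.card F ^ (i + j) := by
    rw [ncard_prod, ncard_Mo, ncard_Mo, pow_add]
  rw [← h1, strat i j, ncard_biUnion]
  · refine Finset.sum_congr rfl fun d _ => ?_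
    rw [Set.ncard_image_of_injOn (piece_injOn d _ _), ncard_prod, ncard_Mo]
  · intro d _
    exact Set.Finite.image _ ((Mo_finite d).prod (Cp_finite _ _))
  · intro d _ e _ hde
    rw [Set.disjoint_left]
    rintro x hxd hxe
    exact hde ((gcd_of_mem hxd).2.symm.trans (gcd_of_mem hxe).2)


variable (F) in
/-- number of coprime monic pairs of given degrees -/
noncomputable def Cc (i j : ℕ) : ℕ := (Cp F i j).ncard

lemma Mo_zero : Mo F 0 = {1} := by
  ext p
  constructor
  · rintro ⟨hm, hd⟩; exact hm.natDegree_eq_zero.1 hd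
  · rintro rfl; exact ⟨monic_one, natDegree_one⟩

lemma Cp_right_zero (i : ℕ) : Cp F i 0 = (fun u => (u, (1 : F[X]))) '' Mo F i := by
  ext ⟨u, v⟩
  constructor
  · rintro ⟨hu, hv, -⟩
    rw [Mo_zero] at hv
    have hv1 : v = 1 := hv
    subst hv1
    exact ⟨u, hu, rfl⟩
  · rintro ⟨u', hu', heq⟩
    obtain ⟨rfl, rfl⟩ : u' = u ∧ (1 : F[X]) = v := by
      simpa [Prod.ext_iff] using heq
    exact ⟨hu', by rw [Mo_zero]; rfl, isCoprime_one_right⟩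

lemma Cc_right_zero (i : ℕ) : Cc F i 0 = Fintype.card F ^ i := by
  rw [Cc, Cp_right_zero, Set.ncard_image_of_injective _
    (fun a b h => congrArg Prod.fst h), ncard_Mo]

lemma Cc_swap (i j : ℕ) : Cc F i j = Cc F j i := by
  have : Cp F j i = Prod.swap '' Cp F i j := by
    ext ⟨u, v⟩
    constructor
    · rintro ⟨hu, hv, h⟩; exact ⟨(v, u), ⟨hv, hu, h.symm⟩, rfl⟩
    · rintro ⟨⟨u', v'⟩, ⟨h1, h2, h3⟩, heq⟩
      obtain ⟨rfl, rfl⟩ : v' = u ∧ u' = v := by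
        simpa [Prod.ext_iff, Prod.swap] using heq
      exact ⟨h2, h1, h3.symm⟩
  rw [Cc, Cc, this, Set.ncard_image_of_injective _ Prod.swap_injective]

lemma Cc_add_eq (i j : ℕ) (hi : 1 ≤ i) (hj : 1 ≤ j) :
    Cc F i j + Fintype.card F ^ (i + j - 1) = Fintype.card F ^ (i + j) := by
  have k1 := key (F := F) i j
  have k2 := key (F := F) (i - 1) (j - 1)
  have hm : min i j = min (i - 1) (j - 1) + 1 := by omega
  rw [hm, Finset.sum_range_succ'] at k1
  have hterm : ∀ d : ℕ, Fintype.card F ^ (d + 1) * (Cp F (i - (d + 1)) (j - (d + 1))).ncard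
      = Fintype.card F * (Fintype.card F ^ d * (Cp F ((i - 1) - d) ((j - 1) - d)).ncard) := by
    intro d
    have e1 : i - (d + 1) = (i - 1) - d := by omega
    have e2 : j - (d + 1) = (j - 1) - d := by omega
    rw [e1, e2, pow_succ]
    ring
  rw [Finset.sum_congr rfl (fun d _ => hterm d), ← Finset.mul_sum, ← k2] at k1
  have e3 : Fintype.card F * Fintype.card F ^ ((i - 1) + (j - 1)) = Fintype.card F ^ (i + j - 1) := by
    have e4 : i + j - 1 = (i - 1) + (j - 1) + 1 := by omega
    rw [e4, pow_succ']
  rw [e3] at k1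
  simp only [pow_zero, one_mul, Nat.sub_zero] at k1
  rw [Cc]
  omega

lemma colsum (A : ℕ) (hA : 1 ≤ A) (B : ℕ) :
    ∑ j ∈ Finset.range (B + 1), Cc F A j = Fintype.card F ^ (A + B) := by
  induction B with
  | zero => simpa using Cc_right_zero A
  | succ B ih =>
    rw [Finset.sum_range_succ, ih]
    have h := Cc_add_eq (F := F) A (B + 1) hA (by omega)
    have e : A + (B + 1) - 1 = A + B := by omega
    rw [e] at h
    omega

variable (F) in
/-- nonzero coprime pairs with prescribed degrees -/
def Np (i j : ℕ) : Set (F[X] × F[X]) :=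
  {p | p.1 ≠ 0 ∧ p.2 ≠ 0 ∧ IsCoprime p.1 p.2 ∧ p.1.natDegree = i ∧ p.2.natDegree = j}

/-- scaling map -/
noncomputable def scl : (F × F) × (F[X] × F[X]) → F[X] × F[X] :=
  fun x => (C x.1.1 * x.2.1, C x.1.2 * x.2.2)

lemma Np_eq (i j : ℕ) :
    Np F i j = scl '' (({c : F | c ≠ 0} ×ˢ {c : F | c ≠ 0}) ×ˢ Cp F i j) := by
  ext ⟨u, v⟩
  constructor
  · rintro ⟨hu, hv, hcop, hdu, hdv⟩
    have hcu : u.leadingCoeff ≠ 0 := leadingCoeff_ne_zero.2 hu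
    have hcv : v.leadingCoeff ≠ 0 := leadingCoeff_ne_zero.2 hv
    have hu' : IsUnit (C u.leadingCoeff⁻¹) := isUnit_C.2 ((inv_ne_zero hcu).isUnit)
    have hv' : IsUnit (C v.leadingCoeff⁻¹) := isUnit_C.2 ((inv_ne_zero hcv).isUnit)
    refine ⟨((u.leadingCoeff, v.leadingCoeff),
      (u * C u.leadingCoeff⁻¹, v * C v.leadingCoeff⁻¹)),
      ⟨⟨hcu, hcv⟩, ⟨monic_mul_leadingCoeff_inv hu, ?_⟩,
        ⟨monic_mul_leadingCoeff_inv hv, ?_⟩, ?_⟩, ?_⟩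
    · rw [natDegree_mul_C (inv_ne_zero hcu), hdu]
    · rw [natDegree_mul_C (inv_ne_zero hcv), hdv]
    · exact (isCoprime_mul_unit_right_left hu' _ _).2
        ((isCoprime_mul_unit_right_right hv' _ _).2 hcop)
    · simp only [scl, Prod.ext_iff]
      constructor
      · rw [mul_comm (C u.leadingCoeff), mul_assoc, ← C_mul,
          inv_mul_cancel₀ hcu, C_1, mul_one]
      · rw [mul_comm (C v.leadingCoeff), mul_assoc, ← C_mul,
          inv_mul_cancel₀ hcv, C_1, mul_one]
  · rintro ⟨⟨⟨c, d⟩, u₁, v₁⟩, ⟨⟨hc, hd⟩, ⟨hu₁m, hu₁d⟩, ⟨hv₁m, hv₁d⟩, hcop⟩, heq⟩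
    have hc' : (c : F) ≠ 0 := hc
    have hd' : (d : F) ≠ 0 := hd
    obtain ⟨rfl, rfl⟩ : C c * u₁ = u ∧ C d * v₁ = v := by
      simpa [scl, Prod.ext_iff] using heq
    refine ⟨mul_ne_zero (C_ne_zero.2 hc') hu₁m.ne_zero,
      mul_ne_zero (C_ne_zero.2 hd') hv₁m.ne_zero, ?_, ?_, ?_⟩
    · exact (isCoprime_mul_unit_left_left (isUnit_C.2 hc'.isUnit) _ _).2
        ((isCoprime_mul_unit_left_right (isUnit_C.2 hd'.isUnit) _ _).2 hcop)
    · rw [natDegree_C_mul hc']; exact hu₁d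
    · rw [natDegree_C_mul hd']; exact hv₁d

lemma scl_injOn (i j : ℕ) :
    Set.InjOn scl (({c : F | c ≠ 0} ×ˢ {c : F | c ≠ 0}) ×ˢ Cp F i j) := by
  rintro ⟨⟨c, d⟩, u, v⟩ ⟨⟨hc, hd⟩, ⟨hum, -⟩, ⟨hvm, -⟩, -⟩
    ⟨⟨c', d'⟩, u', v'⟩ ⟨⟨hc', hd'⟩, ⟨hum', -⟩, ⟨hvm', -⟩, -⟩ heq
  simp only [scl, Prod.ext_iff] at heq
  obtain ⟨h1, h2⟩ := heq
  have hcc : c = c' := by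
    have := congrArg leadingCoeff h1
    rwa [leadingCoeff_mul, leadingCoeff_mul, leadingCoeff_C, leadingCoeff_C,
      hum.leadingCoeff, hum'.leadingCoeff, mul_one, mul_one] at this
  have hdd : d = d' := by
    have := congrArg leadingCoeff h2
    rwa [leadingCoeff_mul, leadingCoeff_mul, leadingCoeff_C, leadingCoeff_C,
      hvm.leadingCoeff, hvm'.leadingCoeff, mul_one, mul_one] at this
  subst hcc; subst hdd
  obtain rfl : u = u' := mul_left_cancel₀ (C_ne_zero.2 hc) h1
  obtain rfl : v = v' := mul_left_cancel₀ (C_ne_zero.2 hd) h2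
  rfl

lemma ncard_ne_zero_set : ({c : F | c ≠ 0}).ncard = Fintype.card F - 1 := by
  have he : {c : F | c ≠ 0} = ({(0 : F)}ᶜ : Set F) := by ext; simp
  have h := Set.ncard_add_ncard_compl ({(0 : F)} : Set F)
  rw [Set.ncard_singleton] at h
  have h2 : Nat.card F = Fintype.card F := Nat.card_eq_fintype_card
  rw [he]
  omega

lemma Np_finite (i j : ℕ) : (Np F i j).Finite := by
  rw [Np_eq]
  exact Set.Finite.image _ ((Set.toFinite _).prod (Cp_finite i j))

lemma ncard_Np (i j : ℕ) :
    (Np F i j).ncard = (Fintype.card F - 1) * ((Fintype.card F - 1) * Cc F i j) := by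
  rw [Np_eq, Set.ncard_image_of_injOn (scl_injOn i j), ncard_prod, ncard_prod,
    ncard_ne_zero_set, Cc, mul_assoc]

end CountTAux

open CountTAux in
/-- Over a finite field with `q` elements, for positive `a, b, n`, the number of pairs `(u, v)`
of nonzero coprime polynomials with `deg u ≤ a·n`, `deg v ≤ b·n`, and
(`deg u = a·n` or `deg v = b·n`), equals `(q−1)·(q^((a+b)n+1) − q^((a+b)n−1))`. -/
theorem count_T_points (F : Type*) [Field F] [Fintype F] (q : ℕ)
    (hq : Fintype.card F = q) (a b n : ℕ) (ha : 0 < a) (hb : 0 < b) (hn : 0 < n) :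
    Set.ncard {p : F[X] × F[X] | p.1 ≠ 0 ∧ p.2 ≠ 0 ∧ IsCoprime p.1 p.2 ∧
        p.1.natDegree ≤ a * n ∧ p.2.natDegree ≤ b * n ∧
        (p.1.natDegree = a * n ∨ p.2.natDegree = b * n)}
      = (q - 1) * (q ^ ((a + b) * n + 1) - q ^ ((a + b) * n - 1)) := by
  classical
  subst hq
  set q := Fintype.card F with hqdef
  have hq1 : 1 ≤ q := Fintype.card_pos
  set A := a * n with hAdef
  set B := b * n with hBdef
  have hA1 : 1 ≤ A := Nat.mul_pos ha hn
  have hB1 : 1 ≤ B := Nat.mul_pos hb hn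
  set L : Finset (ℕ × ℕ) := ({A} ×ˢ Finset.range (B + 1)) ∪ (Finset.range A ×ˢ {B})
    with hLdef
  have hset : {p : F[X] × F[X] | p.1 ≠ 0 ∧ p.2 ≠ 0 ∧ IsCoprime p.1 p.2 ∧
      p.1.natDegree ≤ A ∧ p.2.natDegree ≤ B ∧
      (p.1.natDegree = A ∨ p.2.natDegree = B)} = ⋃ ij ∈ L, Np F ij.1 ij.2 := by
    ext ⟨u, v⟩
    simp only [Set.mem_setOf_eq, Set.mem_iUnion, hLdef, Finset.mem_union,
      Finset.mem_product, Finset.mem_singleton, Finset.mem_range, Np, exists_prop]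
    constructor
    · rintro ⟨hu, hv, hcop, hdu, hdv, hor⟩
      refine ⟨(u.natDegree, v.natDegree), ?_, hu, hv, hcop, rfl, rfl⟩
      rcases hor with h | h
      · left; exact ⟨h, by omega⟩
      · by_cases h2 : u.natDegree = A
        · left; exact ⟨h2, by omega⟩
        · right; exact ⟨by omega, h⟩
    · rintro ⟨⟨i, j⟩, hij, hu, hv, hcop, hdu, hdv⟩
      simp only at hdu hdv
      refine ⟨hu, hv, hcop, ?_, ?_, ?_⟩ <;>
        rcases hij with ⟨h1, h2⟩ | ⟨h1, h2⟩ <;> omega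
  rw [hset, ncard_biUnion L _ (fun ij _ => Np_finite ij.1 ij.2) ?disj]
  case disj =>
    rintro ⟨i, j⟩ - ⟨i', j'⟩ - hne
    rw [Set.disjoint_left]
    rintro ⟨u, v⟩ ⟨-, -, -, h1, h2⟩ ⟨-, -, -, h3, h4⟩
    simp only at h1 h2 h3 h4
    obtain rfl : i = i' := h1.symm.trans h3
    obtain rfl : j = j' := h2.symm.trans h4
    exact hne rfl
  have step2 : ∑ ij ∈ L, (Np F ij.1 ij.2).ncard
      = (q - 1) * ((q - 1) * ∑ ij ∈ L, Cc F ij.1 ij.2) := by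
    rw [Finset.mul_sum, Finset.mul_sum]
    exact Finset.sum_congr rfl fun ij _ => ncard_Np ij.1 ij.2
  rw [step2]
  have hdisjL : Disjoint ({A} ×ˢ Finset.range (B + 1)) (Finset.range A ×ˢ {B}) := by
    rw [Finset.disjoint_left]
    rintro ⟨i, j⟩ h1 h2
    simp only [Finset.mem_product, Finset.mem_singleton, Finset.mem_range] at h1 h2
    omega
  have s1 : ∑ ij ∈ ({A} ×ˢ Finset.range (B + 1)), Cc F ij.1 ij.2 = q ^ (A + B) := by
    rw [Finset.sum_product]
    simp only [Finset.sum_singleton]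
    exact colsum A hA1 B
  have s2 : ∑ ij ∈ (Finset.range A ×ˢ ({B} : Finset ℕ)), Cc F ij.1 ij.2
      = q ^ (A + B - 1) := by
    rw [Finset.sum_product]
    simp only [Finset.sum_singleton]
    rw [Finset.sum_congr rfl fun i _ => Cc_swap (F := F) i B]
    obtain ⟨A', hA'⟩ : ∃ A', A = A' + 1 := ⟨A - 1, by omega⟩
    rw [hA', colsum B hB1 A']
    congr 1
    omega
  rw [hLdef, Finset.sum_union hdisjL, s1, s2]
  have hX : A + B = (a + b) * n := by rw [hAdef, hBdef, add_mul]
  obtain ⟨Y, hY⟩ : ∃ Y, A + B = Y + 2 := ⟨A + B - 2, by omega⟩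
  have e1 : (a + b) * n + 1 = Y + 3 := by omega
  have e2 : (a + b) * n - 1 = Y + 1 := by omega
  have e3 : A + B - 1 = Y + 1 := by omega
  rw [e1, e2, e3, hY]
  have h2 : q ^ (Y + 1) ≤ q ^ (Y + 3) := Nat.pow_le_pow_right hq1 (by omega)
  zify [hq1, h2]
  ring
end

section
/- Let F_q be a finite field with q elements and let k, l be positive natural numbers. The number of pairs (u, v) of coprime polynomials over F_q (not necessarily monic) with deg u = k and deg v = l equals (q−1)^2 · (q^{k+l} − q^{k+l−1}). -/
open Polynomial
namespace CopCount
set_option linter.unusedSectionVars false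
set_option maxHeartbeats 1000000

variable (F : Type*) [Field F] [Fintype F] [DecidableEq F]

def Mon (n : ℕ) : Set F[X] := {u | u.Monic ∧ u.natDegree = n}
def LTd (n : ℕ) : Set F[X] := {r | r.degree < (n : ℕ)}
def Cop (n : ℕ) : Set (F[X] × F[X]) :=
  {p | p.1.Monic ∧ p.1.natDegree = n ∧ p.2.degree < (n : ℕ) ∧ IsCoprime p.1 p.2}

variable {F}

lemma gcd_eq_one_of_coprime {u r : F[X]} (h : IsCoprime u r) : gcd u r = 1 := by
  rw [← normalize_gcd, normalize_eq_one]
  exact h.isUnit_of_dvd' (gcd_dvd_left u r) (gcd_dvd_right u r)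

lemma gcd_mul_eq {d u r : F[X]} (hd : d.Monic) (h : IsCoprime u r) :
    gcd (d * u) (d * r) = d := by
  rw [gcd_mul_left, gcd_eq_one_of_coprime h, mul_one, hd.normalize_eq_self]

noncomputable def mu : F[X] × (F[X] × F[X]) → F[X] × F[X] :=
  fun x => (x.1 * x.2.1, x.1 * x.2.2)

variable (F) in
def Dom (k : ℕ) : Set (F[X] × (F[X] × F[X])) :=
  ⋃ j ∈ Finset.range (k + 1), (Mon F j) ×ˢ (Cop F (k - j))

lemma mu_mem {k j : ℕ} (hj : j ≤ k) {x : F[X] × (F[X] × F[X])}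
    (hx : x ∈ (Mon F j) ×ˢ (Cop F (k - j))) : mu x ∈ (Mon F k) ×ˢ (LTd F k) := by
  obtain ⟨⟨hd, hdj⟩, hu, huj, hr, hcop⟩ := hx
  refine ⟨⟨hd.mul hu, ?_⟩, ?_⟩
  · show (x.1 * x.2.1).natDegree = k
    rw [natDegree_mul hd.ne_zero hu.ne_zero, hdj, huj]; omega
  · show (x.1 * x.2.2).degree < (k : ℕ)
    rcases eq_or_ne x.2.2 0 with h0 | h0
    · rw [h0, mul_zero, degree_zero]; exact WithBot.bot_lt_coe k
    · have hdr : x.1 * x.2.2 ≠ 0 := mul_ne_zero hd.ne_zero h0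
      rw [← natDegree_lt_iff_degree_lt hdr, natDegree_mul hd.ne_zero h0, hdj]
      have h4 := (natDegree_lt_iff_degree_lt h0).mpr hr
      omega

lemma mem_image_of_mem {k : ℕ} {p : F[X] × F[X]} (hp : p ∈ (Mon F k) ×ˢ (LTd F k)) :
    p ∈ mu '' (Dom F k) := by
  obtain ⟨u, r⟩ := p
  obtain ⟨⟨hm, hk⟩, hr⟩ := hp
  obtain ⟨g, hgdef⟩ : ∃ g, gcd u r = g := ⟨_, rfl⟩
  have hg0 : g ≠ 0 := fun h => hm.ne_zero ((gcd_eq_zero_iff _ _).mp (hgdef.trans h)).1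
  have hgm : g.Monic := by
    rw [← hgdef, ← normalize_gcd]
    exact monic_normalize (hgdef ▸ hg0)
  obtain ⟨u', hu'⟩ : g ∣ u := hgdef ▸ gcd_dvd_left u r
  obtain ⟨r', hr'⟩ : g ∣ r := hgdef ▸ gcd_dvd_right u r
  have hu'm : u'.Monic := hgm.of_mul_monic_left (hu' ▸ hm)
  have hdeg : g.natDegree + u'.natDegree = k := by
    rw [← natDegree_mul hg0 hu'm.ne_zero, ← hu', hk]
  have hcop : IsCoprime u' r' := by
    rw [hu', hr'] at hgdef
    rw [gcd_mul_left, hgm.normalize_eq_self] at hgdef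
    have h3 : gcd u' r' = 1 := by
      have := mul_left_cancel₀ hg0 (hgdef.trans (mul_one g).symm)
      exact this
    exact (gcd_isUnit_iff u' r').mp (h3 ▸ isUnit_one)
  have hr'deg : r'.degree < ((k - g.natDegree : ℕ) : WithBot ℕ) := by
    rcases eq_or_ne r' 0 with h0 | h0
    · rw [h0, degree_zero]; exact WithBot.bot_lt_coe _
    · have hrne : r ≠ 0 := by rw [hr']; exact mul_ne_zero hg0 h0
      rw [← natDegree_lt_iff_degree_lt h0]
      have h4 := (natDegree_lt_iff_degree_lt hrne).mpr hr
      have h5 : r.natDegree = g.natDegree + r'.natDegree := by rw [hr', natDegree_mul hg0 h0]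
      omega
  refine ⟨(g, (u', r')), ?_, ?_⟩
  · exact Set.mem_iUnion₂.mpr ⟨g.natDegree, Finset.mem_range.mpr (by omega),
      ⟨⟨hgm, rfl⟩, hu'm, (by omega : u'.natDegree = k - g.natDegree), hr'deg, hcop⟩⟩
  · show (g * u', g * r') = (u, r)
    rw [← hu', ← hr']

lemma mu_injOn (k : ℕ) : Set.InjOn mu (Dom F k) := by
  rintro ⟨d, u, r⟩ hx ⟨d', u', r'⟩ hy hxy
  simp only [Dom, Set.mem_iUnion₂] at hx hy
  obtain ⟨j, hj, hx⟩ := hx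
  obtain ⟨j', hj', hy⟩ := hy
  have h1 : gcd (d * u) (d * r) = d := gcd_mul_eq hx.1.1 hx.2.2.2.2
  have h2 : gcd (d' * u') (d' * r') = d' := gcd_mul_eq hy.1.1 hy.2.2.2.2
  have e1 : d * u = d' * u' := congrArg Prod.fst hxy
  have e2 : d * r = d' * r' := congrArg Prod.snd hxy
  have hd : d = d' := by rw [← h1, e1, e2, h2]
  have hd0 : d ≠ 0 := hx.1.1.ne_zero
  have hu : u = u' := mul_left_cancel₀ hd0 (by rw [e1, hd])
  have hrr : r = r' := mul_left_cancel₀ hd0 (by rw [e2, hd])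
  rw [hd, hu, hrr]

lemma LTd_eq (n : ℕ) : LTd F n = ↑(degreeLT F n) := by
  ext r; simp [LTd, mem_degreeLT]

lemma finite_LTd (n : ℕ) : (LTd F n).Finite := by
  rw [LTd_eq]
  have : Finite ↥(degreeLT F n) := Finite.of_equiv _ (degreeLTEquiv F n).toEquiv.symm
  exact Set.toFinite _

lemma ncard_LTd (n : ℕ) : (LTd F n).ncard = Fintype.card F ^ n := by
  have e : ↥(LTd F n) ≃ (Fin n → F) :=
    (Equiv.setCongr (LTd_eq n)).trans (degreeLTEquiv F n).toEquiv
  rw [← Nat.card_coe_set_eq, Nat.card_congr e]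
  simp [Nat.card_eq_fintype_card]

lemma finite_Mon (n : ℕ) : (Mon F n).Finite := by
  have : Finite ↥(Mon F n) :=
    Finite.of_equiv _ ((monicEquivDegreeLT n).trans (degreeLTEquiv F n).toEquiv).symm
  exact Set.toFinite _

lemma ncard_Mon (n : ℕ) : (Mon F n).ncard = Fintype.card F ^ n := by
  have e : ↥(Mon F n) ≃ (Fin n → F) :=
    ((Equiv.subtypeEquivRight (fun _ => Iff.rfl)).trans (monicEquivDegreeLT n)).trans
      (degreeLTEquiv F n).toEquiv
  rw [← Nat.card_coe_set_eq, Nat.card_congr e]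
  simp [Nat.card_eq_fintype_card]

lemma finite_Cop (n : ℕ) : (Cop F n).Finite := by
  refine ((finite_Mon n).prod (finite_LTd n)).subset ?_
  rintro ⟨u, r⟩ ⟨h1, h2, h3, _⟩
  exact ⟨⟨h1, h2⟩, h3⟩

lemma ncard_prod {α β : Type*} (s : Set α) (t : Set β) :
    (s ×ˢ t).ncard = s.ncard * t.ncard := by
  rw [← Nat.card_coe_set_eq, ← Nat.card_coe_set_eq, ← Nat.card_coe_set_eq,
    Nat.card_congr (Equiv.Set.prod s t), Nat.card_prod]

lemma ncard_biUnion {α β : Type*} (s : Finset β) (f : β → Set α)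
    (hfin : ∀ b ∈ s, (f b).Finite)
    (hdisj : ∀ b ∈ s, ∀ c ∈ s, b ≠ c → Disjoint (f b) (f c)) :
    (⋃ b ∈ s, f b).ncard = ∑ b ∈ s, (f b).ncard := by
  classical
  induction s using Finset.induction with
  | empty => simp
  | @insert a s hb ih =>
    rw [Finset.sum_insert hb]
    have h1 : (⋃ b ∈ insert a s, f b) = f a ∪ ⋃ b ∈ s, f b := by simp
    rw [h1, Set.ncard_union_eq ?_ (hfin a (Finset.mem_insert_self a s)) ?_]
    · rw [ih (fun b hb => hfin b (Finset.mem_insert_of_mem hb))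
        (fun b hb c hc => hdisj b (Finset.mem_insert_of_mem hb) c (Finset.mem_insert_of_mem hc))]
    · refine Set.disjoint_iUnion₂_right.mpr fun b hbs => ?_
      exact hdisj a (Finset.mem_insert_self a s) b (Finset.mem_insert_of_mem hbs)
        (fun h => hb (h ▸ hbs))
    · exact Set.Finite.biUnion (Finset.finite_toSet s)
        (fun b hb => hfin b (Finset.mem_insert_of_mem hb))

lemma partition (k : ℕ) :
    ∑ j ∈ Finset.range (k + 1), Fintype.card F ^ j * (Cop F (k - j)).ncard
      = Fintype.card F ^ (2 * k) := by
  have himg : mu '' (Dom F k) = (Mon F k) ×ˢ (LTd F k) := by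
    apply Set.eq_of_subset_of_subset
    · rintro p ⟨x, hx, rfl⟩
      simp only [Dom, Set.mem_iUnion₂] at hx
      obtain ⟨j, hj, hx⟩ := hx
      exact mu_mem (by simpa using Nat.lt_succ_iff.mp (Finset.mem_range.mp hj)) hx
    · exact fun p hp => mem_image_of_mem hp
  calc ∑ j ∈ Finset.range (k + 1), Fintype.card F ^ j * (Cop F (k - j)).ncard
      = ∑ j ∈ Finset.range (k + 1), ((Mon F j) ×ˢ (Cop F (k - j))).ncard := by
        refine Finset.sum_congr rfl fun j _ => ?_
        rw [ncard_prod, ncard_Mon]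
    _ = (Dom F k).ncard := by
        rw [Dom, ncard_biUnion]
        · exact fun j _ => (finite_Mon j).prod (finite_Cop (k - j))
        · intro b _ c _ hbc
          refine Set.disjoint_left.mpr ?_
          rintro ⟨d, u, r⟩ ⟨⟨_, hdb⟩, _⟩ ⟨⟨_, hdc⟩, _⟩
          exact hbc (hdb ▸ hdc ▸ rfl)
    _ = (mu '' (Dom F k)).ncard := (Set.ncard_image_of_injOn (mu_injOn k)).symm
    _ = ((Mon F k) ×ˢ (LTd F k)).ncard := by rw [himg]
    _ = Fintype.card F ^ (2 * k) := by
        rw [ncard_prod, ncard_Mon, ncard_LTd, ← pow_add, two_mul]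

lemma ncard_Cop {k : ℕ} (hk : 0 < k) :
    (Cop F k).ncard + Fintype.card F ^ (2 * k - 1) = Fintype.card F ^ (2 * k) := by
  have h1 := partition (F := F) k
  have h2 := partition (F := F) (k - 1)
  rw [Finset.sum_range_succ'] at h1
  have h3 : ∑ i ∈ Finset.range k, Fintype.card F ^ (i + 1) * (Cop F (k - (i + 1))).ncard
      = Fintype.card F ^ (2 * k - 1) := by
    have hre : ∀ i, Fintype.card F ^ (i + 1) * (Cop F (k - (i + 1))).ncard
        = Fintype.card F * (Fintype.card F ^ i * (Cop F ((k - 1) - i)).ncard) := by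
      intro i
      rw [pow_succ]
      have : k - (i + 1) = (k - 1) - i := by omega
      rw [this]; ring
    rw [Finset.sum_congr rfl fun i _ => hre i, ← Finset.mul_sum]
    have hk1 : k - 1 + 1 = k := by omega
    rw [hk1] at h2
    rw [h2, ← pow_succ']
    congr 1
    omega
  rw [h3] at h1
  simp only [pow_zero, one_mul, Nat.sub_zero] at h1
  omega

variable (F) in
/-- pairs of monic coprime polynomials of degrees k and l -/
def MQ (k l : ℕ) : Set (F[X] × F[X]) :=
  {p | p.1.Monic ∧ p.1.natDegree = k ∧ p.2.Monic ∧ p.2.natDegree = l ∧ IsCoprime p.1 p.2}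

noncomputable def nu : F[X] × (F[X] × F[X]) → F[X] × F[X] :=
  fun x => (x.2.1, x.2.1 * x.1 + x.2.2)

lemma nu_image {k l : ℕ} (hk : 0 < k) (hkl : k ≤ l) :
    nu '' ((Mon F (l - k)) ×ˢ (Cop F k)) = MQ F k l := by
  apply Set.eq_of_subset_of_subset
  · rintro p ⟨⟨t, u, r⟩, ⟨⟨ht, htd⟩, hu, hud, hrd, hcop⟩, rfl⟩
    simp only [Mon, Cop, Set.mem_setOf_eq] at *
    have hut : (u * t).Monic := hu.mul ht
    have hutd : (u * t).natDegree = l := by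
      rw [natDegree_mul hu.ne_zero ht.ne_zero, hud, htd]; omega
    have hdr : r.degree < (u * t).degree := by
      refine lt_of_lt_of_le hrd ?_
      rw [degree_eq_natDegree hut.ne_zero, hutd]
      exact_mod_cast Nat.cast_le.mpr hkl
    refine ⟨hu, hud, hut.add_of_left hdr, ?_, ?_⟩
    · show (u * t + r).natDegree = l
      rw [natDegree_eq_of_degree_eq (degree_add_eq_left_of_degree_lt hdr), hutd]
    · show IsCoprime u (u * t + r)
      have := hcop.add_mul_left_right t
      rwa [add_comm] at this
  · rintro ⟨u, v⟩ ⟨hu, hud, hv, hvd, hcop⟩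
    have hdu : u.degree = (k : ℕ) := by rw [degree_eq_natDegree hu.ne_zero, hud]
    have hvr : v %ₘ u + u * (v /ₘ u) = v := modByMonic_add_div v u
    have hrd : (v %ₘ u).degree < (k : ℕ) := hdu ▸ degree_modByMonic_lt v hu
    have hsub : u * (v /ₘ u) = v - v %ₘ u := eq_sub_of_add_eq' hvr
    have hvm : (v - v %ₘ u).Monic := by
      rw [sub_eq_add_neg]
      refine hv.add_of_left ?_
      rw [degree_neg, degree_eq_natDegree hv.ne_zero, hvd]
      exact lt_of_lt_of_le hrd (by exact_mod_cast Nat.cast_le.mpr hkl)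
    have htm : (v /ₘ u).Monic := hu.of_mul_monic_left (hsub ▸ hvm)
    have hvsd : (v - v %ₘ u).natDegree = l := by
      rw [natDegree_eq_of_degree_eq (degree_sub_eq_left_of_degree_lt ?_), hvd]
      rw [degree_eq_natDegree hv.ne_zero, hvd]
      exact lt_of_lt_of_le hrd (by exact_mod_cast Nat.cast_le.mpr hkl)
    have htd : (v /ₘ u).natDegree = l - k := by
      have := natDegree_mul hu.ne_zero htm.ne_zero
      rw [hsub, hvsd, hud] at this
      omega
    have hcop' : IsCoprime u (v %ₘ u) := by
      rw [← hvr] at hcop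
      exact hcop.of_add_mul_left_right
    refine ⟨(v /ₘ u, (u, v %ₘ u)), ⟨⟨htm, htd⟩, hu, hud, hrd, hcop'⟩, ?_⟩
    show (u, u * (v /ₘ u) + v %ₘ u) = (u, v)
    rw [add_comm, hvr]

lemma nu_injOn {k l : ℕ} : Set.InjOn nu ((Mon F (l - k)) ×ˢ (Cop F k)) := by
  rintro ⟨t, u, r⟩ ⟨_, hu, hud, hrd, _⟩ ⟨t', u', r'⟩ ⟨_, hu', hud', hrd', _⟩ heq
  have e0 : u = u' := congrArg Prod.fst heq
  subst e0
  have e : u * t + r = u * t' + r' := congrArg Prod.snd heq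
  have htt : t = t' := by
    by_contra hne
    have h5 : u * (t - t') = r' - r := by linear_combination e
    have hdeg1 : (k : WithBot ℕ) ≤ (u * (t - t')).degree := by
      rw [degree_mul, degree_eq_natDegree hu.ne_zero, hud]
      exact le_add_of_nonneg_right (zero_le_degree_iff.mpr (sub_ne_zero.mpr hne))
    have hdeg2 : (r' - r).degree < (k : ℕ) :=
      lt_of_le_of_lt (degree_sub_le r' r) (max_lt hrd' hrd)
    rw [h5] at hdeg1
    exact absurd (lt_of_le_of_lt hdeg1 hdeg2) (lt_irrefl _)
  subst htt
  have : r = r' := by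
    have := add_left_cancel e
    exact this
  rw [this]

lemma ncard_MQ_of_le {k l : ℕ} (hk : 0 < k) (hkl : k ≤ l) :
    (MQ F k l).ncard + Fintype.card F ^ (k + l - 1) = Fintype.card F ^ (k + l) := by
  have hS := ncard_Cop (F := F) hk
  have himg : (MQ F k l).ncard = Fintype.card F ^ (l - k) * (Cop F k).ncard := by
    rw [← nu_image hk hkl, Set.ncard_image_of_injOn nu_injOn, ncard_prod, ncard_Mon]
  have e1 : Fintype.card F ^ (k + l - 1) = Fintype.card F ^ (l - k) * Fintype.card F ^ (2 * k - 1) := by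
    rw [← pow_add]; congr 1; omega
  have e2 : Fintype.card F ^ (k + l) = Fintype.card F ^ (l - k) * Fintype.card F ^ (2 * k) := by
    rw [← pow_add]; congr 1; omega
  rw [himg, e1, e2, ← Nat.mul_add, hS]

lemma ncard_MQ_symm (k l : ℕ) : (MQ F k l).ncard = (MQ F l k).ncard := by
  rw [← Set.ncard_image_of_injective (MQ F k l) Prod.swap_injective]
  congr 1
  ext ⟨v, u⟩
  constructor
  · rintro ⟨⟨a, b⟩, ⟨h1, h2, h3, h4, h5⟩, he⟩
    obtain ⟨rfl, rfl⟩ : b = v ∧ a = u := by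
      simpa [Prod.ext_iff, eq_comm] using he
    exact ⟨h3, h4, h1, h2, h5.symm⟩
  · rintro ⟨h1, h2, h3, h4, h5⟩
    exact ⟨(u, v), ⟨h3, h4, h1, h2, h5.symm⟩, rfl⟩

lemma ncard_MQ {k l : ℕ} (hk : 0 < k) (hl : 0 < l) :
    (MQ F k l).ncard + Fintype.card F ^ (k + l - 1) = Fintype.card F ^ (k + l) := by
  rcases le_total k l with h | h
  · exact ncard_MQ_of_le hk h
  · rw [ncard_MQ_symm (F := F) k l]
    have := ncard_MQ_of_le (F := F) hl h
    rwa [Nat.add_comm l k] at this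

lemma ncard_ne_zero_set : ({x : F | x ≠ 0}).ncard = Fintype.card F - 1 := by
  have h : {x : F | x ≠ 0} = Set.univ \ {0} := by ext; simp
  rw [h, Set.ncard_diff_singleton_of_mem (Set.mem_univ 0), Set.ncard_univ,
    Nat.card_eq_fintype_card]

noncomputable def xi : (F × F) × (F[X] × F[X]) → F[X] × F[X] :=
  fun x => (C x.1.1 * x.2.1, C x.1.2 * x.2.2)

lemma xi_image {k l : ℕ} :
    xi '' ((({x : F | x ≠ 0}) ×ˢ ({x : F | x ≠ 0})) ×ˢ (MQ F k l))
      = {p : F[X] × F[X] | p.1 ≠ 0 ∧ p.2 ≠ 0 ∧ p.1.natDegree = k ∧ p.2.natDegree = l ∧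
          IsCoprime p.1 p.2} := by
  apply Set.eq_of_subset_of_subset
  · rintro p ⟨⟨⟨a, b⟩, u, v⟩, ⟨⟨ha, hb⟩, hu, hud, hv, hvd, hcop⟩, rfl⟩
    simp only [Set.mem_setOf_eq] at ha hb
    have hCa : (C a : F[X]) ≠ 0 := by simpa using ha
    have hCb : (C b : F[X]) ≠ 0 := by simpa using hb
    refine ⟨mul_ne_zero hCa hu.ne_zero, mul_ne_zero hCb hv.ne_zero, ?_, ?_, ?_⟩
    · show (C a * u).natDegree = k
      rw [natDegree_mul hCa hu.ne_zero, natDegree_C, hud, Nat.zero_add]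
    · show (C b * v).natDegree = l
      rw [natDegree_mul hCb hv.ne_zero, natDegree_C, hvd, Nat.zero_add]
    · show IsCoprime (C a * u) (C b * v)
      have hua : IsUnit (C a : F[X]) := isUnit_C.mpr (isUnit_iff_ne_zero.mpr ha)
      have hub : IsUnit (C b : F[X]) := isUnit_C.mpr (isUnit_iff_ne_zero.mpr hb)
      rw [isCoprime_mul_unit_left_left hua u (C b * v),
        isCoprime_mul_unit_left_right hub u v]
      exact hcop
  · rintro ⟨u, v⟩ ⟨hu0, hv0, hud, hvd, hcop⟩
    have ha : u.leadingCoeff ≠ 0 := leadingCoeff_ne_zero.mpr hu0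
    have hb : v.leadingCoeff ≠ 0 := leadingCoeff_ne_zero.mpr hv0
    have hCa : (C u.leadingCoeff⁻¹ : F[X]) ≠ 0 := by simpa using inv_ne_zero ha
    have hCb : (C v.leadingCoeff⁻¹ : F[X]) ≠ 0 := by simpa using inv_ne_zero hb
    have hum : (C u.leadingCoeff⁻¹ * u).Monic := by
      rw [mul_comm]; exact monic_mul_leadingCoeff_inv hu0
    have hvm : (C v.leadingCoeff⁻¹ * v).Monic := by
      rw [mul_comm]; exact monic_mul_leadingCoeff_inv hv0
    refine ⟨((u.leadingCoeff, v.leadingCoeff),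
      (C u.leadingCoeff⁻¹ * u, C v.leadingCoeff⁻¹ * v)), ⟨⟨ha, hb⟩, hum, ?_, hvm, ?_, ?_⟩, ?_⟩
    · rw [natDegree_mul hCa hu0, natDegree_C, hud, Nat.zero_add]
    · rw [natDegree_mul hCb hv0, natDegree_C, hvd, Nat.zero_add]
    · have hua : IsUnit (C u.leadingCoeff⁻¹ : F[X]) :=
        isUnit_C.mpr (isUnit_iff_ne_zero.mpr (inv_ne_zero ha))
      have hub : IsUnit (C v.leadingCoeff⁻¹ : F[X]) :=
        isUnit_C.mpr (isUnit_iff_ne_zero.mpr (inv_ne_zero hb))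
      rw [isCoprime_mul_unit_left_left hua u (C v.leadingCoeff⁻¹ * v),
        isCoprime_mul_unit_left_right hub u v]
      exact hcop
    · show (C u.leadingCoeff * (C u.leadingCoeff⁻¹ * u),
        C v.leadingCoeff * (C v.leadingCoeff⁻¹ * v)) = (u, v)
      rw [← mul_assoc, ← C_mul, mul_inv_cancel₀ ha, C_1, one_mul,
        ← mul_assoc, ← C_mul, mul_inv_cancel₀ hb, C_1, one_mul]

lemma xi_injOn {k l : ℕ} :
    Set.InjOn xi ((({x : F | x ≠ 0}) ×ˢ ({x : F | x ≠ 0})) ×ˢ (MQ F k l)) := by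
  rintro ⟨⟨a, b⟩, u, v⟩ ⟨⟨ha, hb⟩, hu, _, hv, _, _⟩ ⟨⟨a', b'⟩, u', v'⟩
    ⟨⟨ha', hb'⟩, hu', _, hv', _, _⟩ heq
  simp only [Set.mem_setOf_eq] at ha hb ha' hb'
  have e1 : C a * u = C a' * u' := congrArg Prod.fst heq
  have e2 : C b * v = C b' * v' := congrArg Prod.snd heq
  have haa : a = a' := by
    simpa [leadingCoeff_mul, leadingCoeff_C, hu.leadingCoeff, hu'.leadingCoeff]
      using congrArg leadingCoeff e1
  have hbb : b = b' := by
    simpa [leadingCoeff_mul, leadingCoeff_C, hv.leadingCoeff, hv'.leadingCoeff]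
      using congrArg leadingCoeff e2
  subst haa; subst hbb
  have hCa : (C a : F[X]) ≠ 0 := by simpa using ha
  have hCb : (C b : F[X]) ≠ 0 := by simpa using hb
  have huu : u = u' := mul_left_cancel₀ hCa e1
  have hvv : v = v' := mul_left_cancel₀ hCb e2
  rw [huu, hvv]

lemma finite_MQ (k l : ℕ) : (MQ F k l).Finite := by
  refine ((finite_Mon k).prod (finite_Mon l)).subset ?_
  rintro ⟨u, v⟩ ⟨h1, h2, h3, h4, _⟩
  exact ⟨⟨h1, h2⟩, h3, h4⟩

end CopCount

open CopCount in
/-- Over a finite field with `q` elements, for positive `k, l`, the number of pairs of coprime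
(not necessarily monic) polynomials of degrees `k` and `l` equals
`(q−1)² · (q^(k+l) − q^(k+l−1))`. -/
theorem count_coprime_pairs_nonmonic (F : Type*) [Field F] [Fintype F] (q : ℕ)
    (hq : Fintype.card F = q) (k l : ℕ) (hk : 0 < k) (hl : 0 < l) :
    Set.ncard {p : F[X] × F[X] | p.1 ≠ 0 ∧ p.2 ≠ 0 ∧ p.1.natDegree = k ∧ p.2.natDegree = l ∧
        IsCoprime p.1 p.2}
      = (q - 1) ^ 2 * (q ^ (k + l) - q ^ (k + l - 1)) := by
  classical
  subst hq
  rw [← xi_image (k := k) (l := l), Set.ncard_image_of_injOn xi_injOn, ncard_prod, ncard_prod,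
    ncard_ne_zero_set]
  have hMQ := ncard_MQ (F := F) hk hl
  have hsub : (MQ F k l).ncard
      = Fintype.card F ^ (k + l) - Fintype.card F ^ (k + l - 1) := by omega
  rw [hsub, sq]
end

section
/- Let K be a field and let u, v be monic polynomials over K of degrees d1 > 0 and d2 > 0, and let k be a natural number with k ≤ min(d1, d2). Then the greatest common divisor of u and v has degree at least k if and only if the Sylvester matrix of u and v (the (d1+d2)×(d1+d2) matrix whose determinant is the resultant of u and v) has rank at most d1 + d2 − k. -/
open Polynomial

/-- The Sylvester matrix of two polynomials `u, v` of degrees `d1, d2`: the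
`(d1+d2)×(d1+d2)` matrix whose first `d2` columns are the successive shifts of the
coefficient sequence of `u` and whose last `d1` columns are the successive shifts of the
coefficient sequence of `v`; its determinant is (up to sign convention) the resultant
`Res(u, v)`. -/
noncomputable def sylvesterMatrix {K : Type*} [Field K] (d1 d2 : ℕ) (u v : K[X]) :
    Matrix (Fin (d1 + d2)) (Fin (d1 + d2)) K :=
  fun i j =>
    if (j : ℕ) < d2 then
      (if (j : ℕ) ≤ (i : ℕ) then u.coeff ((i : ℕ) - (j : ℕ)) else 0)
    else
      (if (j : ℕ) - d2 ≤ (i : ℕ) then v.coeff ((i : ℕ) - ((j : ℕ) - d2)) else 0)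

namespace SylvesterAux

variable {K : Type*} [Field K]

/-- The polynomial `∑_{j < d} x_j X^j` built from a vector of length `N`. -/
noncomputable def polyOfFn (N d : ℕ) (x : Fin N → K) : K[X] :=
  ∑ j : Fin N, if (j : ℕ) < d then C (x j) * X ^ (j : ℕ) else 0

/-- The polynomial `∑_{d2 ≤ j} x_j X^(j - d2)` built from a vector of length `N`. -/
noncomputable def polyOfFnQ (N d2 : ℕ) (x : Fin N → K) : K[X] :=
  ∑ j : Fin N, if (j : ℕ) < d2 then 0 else C (x j) * X ^ ((j : ℕ) - d2)

lemma coeff_polyOfFn_lt {N d : ℕ} (x : Fin N → K) (j : Fin N) (hj : (j : ℕ) < d) :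
    (polyOfFn N d x).coeff j = x j := by
  rw [polyOfFn, finset_sum_coeff]
  rw [Finset.sum_eq_single j]
  · simp [hj]
  · intro b _ hb
    by_cases h : (b : ℕ) < d
    · simp only [if_pos h, coeff_C_mul, coeff_X_pow]
      have : (j : ℕ) ≠ (b : ℕ) := fun h' => hb (Fin.ext h'.symm)
      simp [this]
    · simp [h]
  · simp

lemma coeff_polyOfFn_ge {N d : ℕ} (x : Fin N → K) {m : ℕ} (hm : d ≤ m) :
    (polyOfFn N d x).coeff m = 0 := by
  rw [polyOfFn, finset_sum_coeff]
  apply Finset.sum_eq_zero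
  intro b _
  by_cases h : (b : ℕ) < d
  · simp only [if_pos h, coeff_C_mul, coeff_X_pow]
    have : m ≠ (b : ℕ) := by omega
    simp [this]
  · simp [h]

lemma degree_polyOfFn_lt {N d : ℕ} (x : Fin N → K) : (polyOfFn N d x).degree < (d : ℕ) := by
  rw [degree_lt_iff_coeff_zero]
  intro m hm
  exact coeff_polyOfFn_ge x hm

lemma coeff_polyOfFnQ_lt {N d2 : ℕ} (x : Fin N → K) (j : Fin N) (hj : d2 ≤ (j : ℕ)) :
    (polyOfFnQ N d2 x).coeff ((j : ℕ) - d2) = x j := by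
  rw [polyOfFnQ, finset_sum_coeff]
  rw [Finset.sum_eq_single j]
  · simp [Nat.not_lt.mpr hj]
  · intro b _ hb
    by_cases h : (b : ℕ) < d2
    · simp [h]
    · simp only [if_neg h, coeff_C_mul, coeff_X_pow]
      have : (j : ℕ) - d2 ≠ (b : ℕ) - d2 := by
        intro h'
        exact hb (Fin.ext (by omega))
      simp [this]
  · simp

lemma coeff_polyOfFnQ_ge {N d2 : ℕ} (x : Fin N → K) {m : ℕ} (hm : N ≤ d2 + m) :
    (polyOfFnQ N d2 x).coeff m = 0 := by
  rw [polyOfFnQ, finset_sum_coeff]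
  apply Finset.sum_eq_zero
  intro b _
  by_cases h : (b : ℕ) < d2
  · simp [h]
  · simp only [if_neg h, coeff_C_mul, coeff_X_pow]
    have hb : (b : ℕ) < N := b.isLt
    have : m ≠ (b : ℕ) - d2 := by omega
    simp [this]

lemma degree_polyOfFnQ_lt {d1 d2 : ℕ} (x : Fin (d1 + d2) → K) :
    (polyOfFnQ (d1 + d2) d2 x).degree < (d1 : ℕ) := by
  rw [degree_lt_iff_coeff_zero]
  intro m hm
  exact coeff_polyOfFnQ_ge x (by omega)

lemma polyOfFn_add {N d : ℕ} (x y : Fin N → K) :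
    polyOfFn N d (x + y) = polyOfFn N d x + polyOfFn N d y := by
  rw [polyOfFn, polyOfFn, polyOfFn, ← Finset.sum_add_distrib]
  apply Finset.sum_congr rfl
  intro j _
  by_cases h : (j : ℕ) < d <;> simp [h, C_add, add_mul]

lemma polyOfFn_smul {N d : ℕ} (a : K) (x : Fin N → K) :
    polyOfFn N d (a • x) = C a * polyOfFn N d x := by
  rw [polyOfFn, polyOfFn, Finset.mul_sum]
  apply Finset.sum_congr rfl
  intro j _
  by_cases h : (j : ℕ) < d <;> simp [h, C_mul, mul_assoc]

/-- The linear map sending `c` (coefficients of a polynomial of degree `< e`) to the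
vector encoding the pair `(c·v', -c·u')`, which lies in the kernel of the Sylvester map. -/
noncomputable def theta (d1 d2 e : ℕ) (u' v' : K[X]) :
    (Fin e → K) →ₗ[K] (Fin (d1 + d2) → K) where
  toFun c := fun j =>
    if (j : ℕ) < d2 then (polyOfFn e e c * v').coeff j
    else (-(polyOfFn e e c * u')).coeff ((j : ℕ) - d2)
  map_add' c c' := by
    funext j
    by_cases h : (j : ℕ) < d2 <;>
      simp [h, polyOfFn_add, add_mul, neg_add, add_comm]
  map_smul' a c := by
    funext j
    by_cases h : (j : ℕ) < d2 <;>
      simp [h, polyOfFn_smul, mul_assoc]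

lemma theta_apply {d1 d2 e : ℕ} (u' v' : K[X]) (c : Fin e → K) (j : Fin (d1 + d2)) :
    theta d1 d2 e u' v' c j =
      if (j : ℕ) < d2 then (polyOfFn e e c * v').coeff j
      else (-(polyOfFn e e c * u')).coeff ((j : ℕ) - d2) := rfl

lemma mulVec_eq {d1 d2 : ℕ} (u v : K[X]) (x : Fin (d1 + d2) → K) (i : Fin (d1 + d2)) :
    (sylvesterMatrix d1 d2 u v).mulVec x i =
      (polyOfFn (d1 + d2) d2 x * u + polyOfFnQ (d1 + d2) d2 x * v).coeff i := by
  rw [Matrix.mulVec, dotProduct, coeff_add, polyOfFn, polyOfFnQ,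
    Finset.sum_mul, Finset.sum_mul, finset_sum_coeff, finset_sum_coeff,
    ← Finset.sum_add_distrib]
  apply Finset.sum_congr rfl
  intro j _
  by_cases h : (j : ℕ) < d2
  · simp only [sylvesterMatrix, if_pos h, zero_mul, coeff_zero, add_zero]
    rw [mul_right_comm, coeff_mul_X_pow']
    split_ifs <;> simp [mul_comm]
  · simp only [sylvesterMatrix, if_neg h, zero_mul, coeff_zero, zero_add]
    rw [mul_right_comm, coeff_mul_X_pow']
    split_ifs <;> simp [mul_comm]

lemma mem_ker_iff {d1 d2 : ℕ} (u v : K[X]) (hu0 : u ≠ 0) (hv0 : v ≠ 0)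
    (hud : u.natDegree = d1) (hvd : v.natDegree = d2) (x : Fin (d1 + d2) → K) :
    (sylvesterMatrix d1 d2 u v).mulVecLin x = 0 ↔
      polyOfFn (d1 + d2) d2 x * u + polyOfFnQ (d1 + d2) d2 x * v = 0 := by
  constructor
  · intro h
    have hdeg : (polyOfFn (d1 + d2) d2 x * u + polyOfFnQ (d1 + d2) d2 x * v).degree
        < ((d1 + d2 : ℕ) : WithBot ℕ) := by
      apply lt_of_le_of_lt (degree_add_le _ _)
      apply max_lt
      · apply lt_of_le_of_lt (degree_mul_le _ _)
        rw [degree_eq_natDegree hu0, hud]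
        calc (polyOfFn (d1 + d2) d2 x).degree + (d1 : ℕ)
            < ((d2 : ℕ) : WithBot ℕ) + (d1 : ℕ) :=
              WithBot.add_lt_add_right (by simp) (degree_polyOfFn_lt x)
          _ = ((d1 + d2 : ℕ) : WithBot ℕ) := by
              rw [← Nat.cast_add]; congr 1; omega
      · apply lt_of_le_of_lt (degree_mul_le _ _)
        rw [degree_eq_natDegree hv0, hvd]
        calc (polyOfFnQ (d1 + d2) d2 x).degree + (d2 : ℕ)
            < ((d1 : ℕ) : WithBot ℕ) + (d2 : ℕ) :=
              WithBot.add_lt_add_right (by simp) (degree_polyOfFnQ_lt x)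
          _ = ((d1 + d2 : ℕ) : WithBot ℕ) := by rw [← Nat.cast_add]
    ext m
    rw [coeff_zero]
    by_cases hm : m < d1 + d2
    · have := congrFun h ⟨m, hm⟩
      rw [Matrix.mulVecLin_apply, mulVec_eq] at this
      exact this
    · exact (degree_lt_iff_coeff_zero _ _).mp hdeg m (by omega)
  · intro h
    funext i
    rw [Matrix.mulVecLin_apply, mulVec_eq, h, coeff_zero]
    rfl

end SylvesterAux

open SylvesterAux in
/-- For monic polynomials `u, v` of degrees `d₁, d₂ > 0` and `k ≤ min(d₁, d₂)`, the gcd of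
`u` and `v` has degree at least `k` if and only if the Sylvester matrix of `u` and `v` has
rank at most `d₁ + d₂ − k`. -/
theorem gcd_deg_ge_iff_sylvester_rank_le (K : Type*) [Field K] [DecidableEq K]
    (d1 d2 k : ℕ) (hd1 : 0 < d1) (hd2 : 0 < d2) (hk : k ≤ min d1 d2)
    (u v : K[X]) (hu : u.Monic) (hv : v.Monic)
    (hud : u.natDegree = d1) (hvd : v.natDegree = d2) :
    k ≤ (gcd u v).natDegree ↔ (sylvesterMatrix d1 d2 u v).rank ≤ d1 + d2 - k := by
  have hu0 : u ≠ 0 := hu.ne_zero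
  have hv0 : v ≠ 0 := hv.ne_zero
  set g : K[X] := gcd u v with hg
  set e : ℕ := g.natDegree with he
  have hg0 : g ≠ 0 := fun h => hu0 ((gcd_eq_zero_iff u v).mp h).1
  obtain ⟨u', huu'⟩ : g ∣ u := gcd_dvd_left u v
  obtain ⟨v', hvv'⟩ : g ∣ v := gcd_dvd_right u v
  have hu'0 : u' ≠ 0 := by rintro rfl; rw [mul_zero] at huu'; exact hu0 huu'
  have hv'0 : v' ≠ 0 := by rintro rfl; rw [mul_zero] at hvv'; exact hv0 hvv'
  have he1 : e ≤ d1 := hud ▸ natDegree_le_of_dvd (gcd_dvd_left u v) hu0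
  have he2 : e ≤ d2 := hvd ▸ natDegree_le_of_dvd (gcd_dvd_right u v) hv0
  have hdu' : e + u'.natDegree = d1 := by
    rw [← hud, huu', natDegree_mul hg0 hu'0, ← he]
  have hdv' : e + v'.natDegree = d2 := by
    rw [← hvd, hvv', natDegree_mul hg0 hv'0, ← he]
  -- coprimality of the cofactors
  have hcop : IsCoprime u' v' := by
    obtain ⟨w, hw⟩ : EuclideanDomain.gcd u v ∣ g :=
      dvd_gcd (EuclideanDomain.gcd_dvd_left u v) (EuclideanDomain.gcd_dvd_right u v)
    have hbez := EuclideanDomain.gcd_eq_gcd_ab u v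
    set a := EuclideanDomain.gcdA u v
    set b := EuclideanDomain.gcdB u v
    refine ⟨a * w, b * w, ?_⟩
    have hgg : g * 1 = g * (a * w * u' + b * w * v') := by
      calc g * 1 = (u * a + v * b) * w := by rw [← hbez, ← hw, mul_one]
        _ = g * (a * w * u' + b * w * v') := by rw [huu', hvv']; ring
    have := mul_left_cancel₀ hg0 hgg
    linear_combination -this
  -- key facts about theta
  set θ := theta (K := K) d1 d2 e u' v' with hθ
  have hPθ : ∀ c : Fin e → K,
      polyOfFn (d1 + d2) d2 (θ c) = polyOfFn e e c * v' := by
    intro c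
    ext m
    by_cases hm : m < d2
    · have hm' : m < d1 + d2 := by omega
      rw [coeff_polyOfFn_lt (θ c) ⟨m, hm'⟩ hm, theta_apply, if_pos hm]
    · rw [coeff_polyOfFn_ge _ (by omega)]
      symm
      apply coeff_eq_zero_of_degree_lt
      apply lt_of_le_of_lt (degree_mul_le _ _)
      rw [degree_eq_natDegree hv'0]
      calc (polyOfFn e e c).degree + (v'.natDegree : ℕ)
          < ((e : ℕ) : WithBot ℕ) + (v'.natDegree : ℕ) :=
            WithBot.add_lt_add_right (by simp) (degree_polyOfFn_lt c)
        _ ≤ (m : WithBot ℕ) := by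
            rw [← Nat.cast_add]
            exact_mod_cast Nat.le_of_lt_succ (by omega)
  have hQθ : ∀ c : Fin e → K,
      polyOfFnQ (d1 + d2) d2 (θ c) = -(polyOfFn e e c * u') := by
    intro c
    ext m
    by_cases hm : m < d1
    · have hm' : d2 + m < d1 + d2 := by omega
      have h1 := coeff_polyOfFnQ_lt (d2 := d2) (θ c) ⟨d2 + m, hm'⟩ (Nat.le_add_right d2 m)
      simp only [Nat.add_sub_cancel_left] at h1
      rw [h1, theta_apply]
      simp
    · rw [coeff_polyOfFnQ_ge _ (by omega), coeff_neg]
      rw [coeff_eq_zero_of_degree_lt, neg_zero]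
      apply lt_of_le_of_lt (degree_mul_le _ _)
      rw [degree_eq_natDegree hu'0]
      calc (polyOfFn e e c).degree + (u'.natDegree : ℕ)
          < ((e : ℕ) : WithBot ℕ) + (u'.natDegree : ℕ) :=
            WithBot.add_lt_add_right (by simp) (degree_polyOfFn_lt c)
        _ ≤ (m : WithBot ℕ) := by
            rw [← Nat.cast_add]
            exact_mod_cast Nat.le_of_lt_succ (by omega)
  -- range θ = kernel of the Sylvester map
  have hker : LinearMap.ker (sylvesterMatrix d1 d2 u v).mulVecLin = LinearMap.range θ := by
    apply le_antisymm
    · intro x hx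
      rw [LinearMap.mem_ker] at hx
      have h0 := (mem_ker_iff u v hu0 hv0 hud hvd x).mp hx
      rw [huu', hvv'] at h0
      have hg2 : g * (polyOfFn (d1 + d2) d2 x * u' + polyOfFnQ (d1 + d2) d2 x * v') = 0 := by
        linear_combination h0
      have hsum := (mul_eq_zero.mp hg2).resolve_left hg0
      have hdvd : v' ∣ polyOfFn (d1 + d2) d2 x := by
        apply (hcop.symm).dvd_of_dvd_mul_right (y := polyOfFn (d1 + d2) d2 x)
        exact ⟨-(polyOfFnQ (d1 + d2) d2 x), by linear_combination hsum⟩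
      obtain ⟨cpx, hcpx⟩ := hdvd
      have hcdeg : ∀ m, e ≤ m → cpx.coeff m = 0 := by
        intro m hm
        rcases eq_or_ne cpx 0 with h | h
        · simp [h]
        · apply coeff_eq_zero_of_natDegree_lt
          have hP0 : polyOfFn (d1 + d2) d2 x ≠ 0 := by
            rw [hcpx]; exact mul_ne_zero hv'0 h
          have hPd : (polyOfFn (d1 + d2) d2 x).natDegree < d2 :=
            (natDegree_lt_iff_degree_lt hP0).mpr (degree_polyOfFn_lt x)
          rw [hcpx, natDegree_mul hv'0 h] at hPd
          omega
      set c : Fin e → K := fun i => cpx.coeff i with hc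
      have hcp : polyOfFn e e c = cpx := by
        ext m
        by_cases hm : m < e
        · rw [coeff_polyOfFn_lt c ⟨m, hm⟩ hm]
        · rw [coeff_polyOfFn_ge _ (by omega), hcdeg m (by omega)]
      have hQx : polyOfFnQ (d1 + d2) d2 x = -(cpx * u') := by
        have hv'2 : v' * (cpx * u' + polyOfFnQ (d1 + d2) d2 x) = 0 := by
          rw [hcpx] at hsum; linear_combination hsum
        have := (mul_eq_zero.mp hv'2).resolve_left hv'0
        linear_combination this
      refine ⟨c, ?_⟩
      funext j
      rw [theta_apply]
      by_cases h : (j : ℕ) < d2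
      · rw [if_pos h, hcp, mul_comm cpx v', ← hcpx, coeff_polyOfFn_lt x j h]
      · rw [if_neg h, hcp, ← hQx, coeff_polyOfFnQ_lt x j (by omega)]
    · rintro _ ⟨c, rfl⟩
      rw [LinearMap.mem_ker, mem_ker_iff u v hu0 hv0 hud hvd, hPθ, hQθ, huu', hvv']
      ring
  have hθinj : Function.Injective θ := by
    rw [injective_iff_map_eq_zero]
    intro c hc
    have hP0 : polyOfFn (d1 + d2) d2 ((0 : Fin (d1+d2) → K)) = 0 := by
      rw [polyOfFn]
      apply Finset.sum_eq_zero
      intro j _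
      by_cases h : (j : ℕ) < d2 <;> simp [h]
    have h1 : polyOfFn e e c * v' = 0 := by
      rw [← hPθ c, hc, hP0]
    have h2 : polyOfFn e e c = 0 := (mul_eq_zero.mp h1).resolve_right hv'0
    funext i
    have := coeff_polyOfFn_lt c i i.isLt
    rw [h2, coeff_zero] at this
    exact this.symm
  -- finrank computations
  have hkere : Module.finrank K (LinearMap.ker (sylvesterMatrix d1 d2 u v).mulVecLin) = e := by
    rw [hker, LinearMap.finrank_range_of_inj hθinj, Module.finrank_fin_fun]
  have hrn := LinearMap.finrank_range_add_finrank_ker (sylvesterMatrix d1 d2 u v).mulVecLin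
  rw [hkere, Module.finrank_fin_fun] at hrn
  have hrank : (sylvesterMatrix d1 d2 u v).rank = d1 + d2 - e := by
    rw [Matrix.rank]
    omega
  rw [hrank]
  have hk1 : k ≤ d1 := le_trans hk (min_le_left _ _)
  omega
end
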